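/- arXiv:2404.01436 — 4 statements merged into one kernel-verified Lean document; each statement's English description precedes it below -/
import Mathlib

section
/- Lemma (Stage II bound on the denominator). Under Assumption 2 alone (together with the recursion v_{t,i} = β₂·v_{t−1,i} + (1−β₂)·g_{t,i}²), for every T ≥ 1: (1/T)·Σ_{t=1}^T E[√(β₂·‖v_{t−1}‖ + ζ)] ≤ √ζ + d·√(D₀ + ‖v₀‖) + (2·√(d·D₁)/√(1−β₂)) · (1/T)·Σ_{t=1}^T E[‖∇f(x_t)‖]. -/
open MeasureTheory Finset

lemma aux_sqrt_add_le (a b : ℝ) (ha : 0 ≤ a) (hb : 0 ≤ b) :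
    Real.sqrt (a + b) ≤ Real.sqrt a + Real.sqrt b := by
  rw [← Real.sqrt_sq (by positivity : (0:ℝ) ≤ Real.sqrt a + Real.sqrt b)]
  apply Real.sqrt_le_sqrt
  nlinarith [Real.sq_sqrt ha, Real.sq_sqrt hb, Real.sqrt_nonneg a, Real.sqrt_nonneg b]

lemma aux_sqrt_sum_le {ι : Type*} (s : Finset ι) (w : ι → ℝ) (hw : ∀ i ∈ s, 0 ≤ w i) :
    Real.sqrt (∑ i ∈ s, w i) ≤ ∑ i ∈ s, Real.sqrt (w i) := by
  classical
  induction s using Finset.cons_induction with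
  | empty => simp
  | cons i s his ih =>
    rw [Finset.sum_cons, Finset.sum_cons]
    refine le_trans (aux_sqrt_add_le _ _ (hw i (Finset.mem_cons_self _ _))
      (Finset.sum_nonneg fun j hj => hw j (Finset.mem_cons_of_mem hj))) ?_
    exact add_le_add_right (ih fun j hj => hw j (Finset.mem_cons_of_mem hj)) _

lemma aux_sum_abs_le_sqrt_card {d : ℕ} (a : Fin d → ℝ) :
    ∑ i, |a i| ≤ Real.sqrt d * Real.sqrt (∑ i, (a i)^2) := by
  have h1 : (∑ i, |a i|)^2 ≤ (d:ℝ) * ∑ i, (a i)^2 := by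
    have := sq_sum_le_card_mul_sum_sq (s := Finset.univ) (f := fun i => |a i|)
    simpa [sq_abs] using this
  calc ∑ i, |a i| = Real.sqrt ((∑ i, |a i|)^2) :=
        (Real.sqrt_sq (Finset.sum_nonneg fun i _ => abs_nonneg _)).symm
    _ ≤ Real.sqrt ((d:ℝ) * ∑ i, (a i)^2) := Real.sqrt_le_sqrt h1
    _ = Real.sqrt d * Real.sqrt (∑ i, (a i)^2) := Real.sqrt_mul (by positivity) _

lemma aux_sqrt_sum_sq_le_sum_abs {d : ℕ} (a : Fin d → ℝ) :
    Real.sqrt (∑ i, (a i)^2) ≤ ∑ i, |a i| := by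
  refine le_trans (aux_sqrt_sum_le _ _ fun i _ => sq_nonneg _) ?_
  apply le_of_eq
  exact Finset.sum_congr rfl fun i _ => Real.sqrt_sq_eq_abs _

lemma aux_coord_le_norm {d : ℕ} (y : EuclideanSpace ℝ (Fin d)) (i : Fin d) : |y i| ≤ ‖y‖ := by
  rw [EuclideanSpace.norm_eq, ← Real.sqrt_sq_eq_abs]
  apply Real.sqrt_le_sqrt
  have : |y i| ^ 2 = ‖y i‖ ^ 2 := by rw [Real.norm_eq_abs]
  rw [← sq_abs, this]
  exact Finset.single_le_sum (f := fun j => ‖y j‖^2) (fun j _ => by positivity)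
    (Finset.mem_univ i)

lemma aux_norm_le_sum {d : ℕ} (y : EuclideanSpace ℝ (Fin d)) (hy : ∀ i, 0 ≤ y i) :
    ‖y‖ ≤ ∑ i, y i := by
  rw [EuclideanSpace.norm_eq]
  have h1 : ∀ i : Fin d, ‖y i‖^2 = (y i)^2 := fun i => by rw [Real.norm_eq_abs, sq_abs]
  calc Real.sqrt (∑ i, ‖y i‖^2) = Real.sqrt (∑ i, (y i)^2) := by
        congr 1; exact Finset.sum_congr rfl fun i _ => h1 i
    _ ≤ ∑ i, |y i| := aux_sqrt_sum_sq_le_sum_abs _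
    _ = ∑ i, y i := Finset.sum_congr rfl fun i _ => abs_of_nonneg (hy i)

lemma aux_geom_le {q : ℝ} (hq0 : 0 ≤ q) (hq1 : q < 1) (n : ℕ) :
    ∑ i ∈ Finset.range n, q ^ i ≤ 1 / (1 - q) := by
  have h2 : (∑ i ∈ Finset.range n, q ^ i) * (q - 1) = q ^ n - 1 := geom_sum_mul q n
  have h3 : (0:ℝ) ≤ q ^ n := pow_nonneg hq0 n
  rw [le_div_iff₀ (by linarith)]
  nlinarith

lemma aux_sqrt_le_one_add (x : ℝ) (hx : 0 ≤ x) : Real.sqrt x ≤ 1 + x := by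
  nlinarith [Real.sq_sqrt hx, Real.sqrt_nonneg x]

lemma aux_sqrt_tangent (x y : ℝ) (hx : 0 ≤ x) (hy : 0 < y) :
    Real.sqrt x ≤ Real.sqrt y + (x - y) / (2 * Real.sqrt y) := by
  have hsy : 0 < Real.sqrt y := Real.sqrt_pos.mpr hy
  have h1 : Real.sqrt y * Real.sqrt y = y := Real.mul_self_sqrt hy.le
  have key : 2 * Real.sqrt y * Real.sqrt x ≤ x + y := by
    nlinarith [Real.mul_self_sqrt hx, sq_nonneg (Real.sqrt x - Real.sqrt y)]
  have h2 : Real.sqrt y + (x - y) / (2 * Real.sqrt y) = (x + y) / (2 * Real.sqrt y) := by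
    field_simp; nlinarith [h1]
  rw [h2, le_div_iff₀ (by positivity)]
  nlinarith [key]

lemma aux_step {Ω : Type} [m0 : MeasurableSpace Ω] (μ : Measure Ω) [IsProbabilityMeasure μ]
    {m : MeasurableSpace Ω} (hm : m ≤ m0)
    (Z K G : Ω → ℝ) (b D₀ D₁ : ℝ) (hb : 0 < b) (hD₀ : 0 < D₀) (hD₁ : 0 < D₁)
    (hZint : Integrable Z μ) (hZnn : ∀ ω, 0 ≤ Z ω) (hZm : AEStronglyMeasurable[m0] Z μ)
    (hKint : Integrable K μ) (hKnn : ∀ ω, 0 ≤ K ω) (hKm : StronglyMeasurable[m] K)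
    (hGm : StronglyMeasurable[m] G) (hGint : Integrable G μ)
    (hcond : ∀ᵐ ω ∂μ, (μ[Z|m]) ω ≤ D₀ + D₁ * (G ω)^2) :
    ∫ ω, Real.sqrt (K ω + b * Z ω) ∂μ
      ≤ ∫ ω, Real.sqrt (K ω + b * D₀) ∂μ + Real.sqrt (b * D₁) * ∫ ω, |G ω| ∂μ := by
  have hKm0 : StronglyMeasurable[m0] K := hKm.mono hm
  have hGm0 : StronglyMeasurable[m0] G := hGm.mono hm
  set W : Ω → ℝ := fun ω => D₀ + D₁ * (G ω)^2 with hW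
  set y : Ω → ℝ := fun ω => K ω + b * W ω with hy
  set h : Ω → ℝ := fun ω => (2 * Real.sqrt (y ω))⁻¹ with hh
  have hWnn : ∀ ω, 0 < W ω := fun ω => by
    have := sq_nonneg (G ω); simp only [hW]; nlinarith
  have hy_lb : ∀ ω, b * D₀ ≤ y ω := fun ω => by
    have := hKnn ω; have : 0 ≤ D₁ * (G ω)^2 := by positivity
    simp only [hy, hW]; nlinarith [hKnn ω]
  have hy_pos : ∀ ω, 0 < y ω := fun ω => lt_of_lt_of_le (by positivity) (hy_lb ω)
  have hy_lb2 : ∀ ω, b * D₁ * (G ω)^2 ≤ y ω := fun ω => by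
    simp only [hy, hW]; nlinarith [hKnn ω, hD₀.le, hb.le]
  have hsqy_pos : ∀ ω, 0 < Real.sqrt (y ω) := fun ω => Real.sqrt_pos.mpr (hy_pos ω)
  have hh_pos : ∀ ω, 0 < h ω := fun ω => by
    simp only [hh]; exact inv_pos.mpr (by have := hsqy_pos ω; linarith)
  have hc0 : (0:ℝ) < 2 * Real.sqrt (b * D₀) := by positivity
  have hh_le : ∀ ω, h ω ≤ (2 * Real.sqrt (b * D₀))⁻¹ := fun ω => by
    simp only [hh]
    apply inv_anti₀ hc0
    have := Real.sqrt_le_sqrt (hy_lb ω)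
    linarith
  -- measurability
  have hym : Measurable[m0] y := by
    apply Measurable.add hKm0.measurable
    exact (((hGm0.measurable.pow_const 2).const_mul D₁).const_add D₀).const_mul b
  have hhm0 : Measurable[m0] h := ((hym.sqrt.const_mul 2).inv)
  have hym' : Measurable[m] y :=
    hKm.measurable.add ((((hGm.measurable.pow_const 2).const_mul D₁).const_add D₀).const_mul b)
  have hhm : StronglyMeasurable[m] h :=
    ((hym'.sqrt.const_mul 2).inv).stronglyMeasurable
  -- integrability of the pieces
  have hGabs : Integrable (fun ω => |G ω|) μ := hGint.abs
  have int_sqrtKbD : Integrable (fun ω => Real.sqrt (K ω + b * D₀)) μ := by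
    apply Integrable.mono' (hKint.add (integrable_const (1 + b * D₀)))
    · exact ((hKm0.measurable.add_const _).sqrt).aestronglyMeasurable
    · filter_upwards with ω
      rw [Real.norm_eq_abs, abs_of_nonneg (Real.sqrt_nonneg _)]
      have := aux_sqrt_le_one_add (K ω + b * D₀) (by nlinarith [hKnn ω, hb.le, hD₀.le])
      simp only [Pi.add_apply]
      linarith
  have ptwise2 : ∀ ω, Real.sqrt (y ω) ≤ Real.sqrt (K ω + b * D₀)
      + Real.sqrt (b * D₁) * |G ω| := by
    intro ω
    have h1 : y ω = (K ω + b * D₀) + (b * D₁) * (G ω)^2 := by simp only [hy, hW]; ring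
    have h2 := aux_sqrt_add_le (K ω + b * D₀) ((b * D₁) * (G ω)^2)
      (by nlinarith [hKnn ω, hb.le, hD₀.le]) (by positivity)
    have h3 : Real.sqrt ((b * D₁) * (G ω)^2) = Real.sqrt (b * D₁) * |G ω| := by
      rw [Real.sqrt_mul (by positivity), Real.sqrt_sq_eq_abs]
    rw [h1]; rw [h3] at h2; exact h2
  have int_sqrty : Integrable (fun ω => Real.sqrt (y ω)) μ := by
    apply Integrable.mono' (int_sqrtKbD.add (hGabs.const_mul (Real.sqrt (b * D₁))))
    · exact hym.sqrt.aestronglyMeasurable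
    · filter_upwards with ω
      rw [Real.norm_eq_abs, abs_of_nonneg (Real.sqrt_nonneg _)]
      simpa using ptwise2 ω
  have int_hZ : Integrable (fun ω => h ω * Z ω) μ := by
    apply Integrable.mono' (hZint.const_mul ((2 * Real.sqrt (b * D₀))⁻¹))
    · exact hhm0.aestronglyMeasurable.mul hZm
    · filter_upwards with ω
      rw [Real.norm_eq_abs, abs_of_nonneg (mul_nonneg (hh_pos ω).le (hZnn ω))]
      exact mul_le_mul_of_nonneg_right (hh_le ω) (hZnn ω)
  have hWm : Measurable[m0] W :=
    ((hGm0.measurable.pow_const 2).const_mul D₁).const_add D₀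
  have claim2 : ∀ ω, h ω * (D₁ * (G ω)^2) ≤ D₁ / (2 * Real.sqrt (b * D₁)) * |G ω| := by
    intro ω
    have hc : (0:ℝ) < Real.sqrt (b * D₁) := Real.sqrt_pos.mpr (by positivity)
    have hs1 : Real.sqrt (b * D₁) * |G ω| ≤ Real.sqrt (y ω) := by
      have h4 := Real.sqrt_le_sqrt (hy_lb2 ω)
      rwa [show b * D₁ * (G ω)^2 = (b * D₁) * (G ω)^2 by ring,
        Real.sqrt_mul (by positivity), Real.sqrt_sq_eq_abs] at h4
    have hcc : D₁ / (2 * Real.sqrt (b * D₁)) * (2 * Real.sqrt (b * D₁)) = D₁ := by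
      field_simp
    simp only [hh]
    rw [inv_mul_le_iff₀ (by have := hsqy_pos ω; linarith)]
    have habs : |G ω| * |G ω| = (G ω)^2 := by rw [← abs_mul, abs_mul_self]; ring
    nlinarith [hs1, abs_nonneg (G ω), div_nonneg hD₁.le (by positivity : (0:ℝ) ≤ 2 * Real.sqrt (b * D₁)),
      mul_le_mul_of_nonneg_left hs1 (div_nonneg hD₁.le (by positivity : (0:ℝ) ≤ 2 * Real.sqrt (b * D₁)))]
  have int_hW : Integrable (fun ω => h ω * W ω) μ := by
    apply Integrable.mono' ((integrable_const (D₀ * (2 * Real.sqrt (b * D₀))⁻¹)).add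
      (hGabs.const_mul (D₁ / (2 * Real.sqrt (b * D₁)))))
    · exact (hhm0.mul hWm).aestronglyMeasurable
    · filter_upwards with ω
      rw [Real.norm_eq_abs, abs_of_nonneg (mul_nonneg (hh_pos ω).le (hWnn ω).le)]
      have c1 : h ω * D₀ ≤ D₀ * (2 * Real.sqrt (b * D₀))⁻¹ := by
        rw [mul_comm]
        exact mul_le_mul_of_nonneg_left (hh_le ω) hD₀.le
      have c2 := claim2 ω
      simp only [Pi.add_apply, hW]
      calc h ω * (D₀ + D₁ * (G ω)^2) = h ω * D₀ + h ω * (D₁ * (G ω)^2) := by ring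
        _ ≤ _ := by exact add_le_add c1 c2
  -- pointwise tangent bound
  have ptwise : ∀ ω, Real.sqrt (K ω + b * Z ω)
      ≤ Real.sqrt (y ω) + b * (h ω * Z ω) - b * (h ω * W ω) := by
    intro ω
    have ht := aux_sqrt_tangent (K ω + b * Z ω) (y ω)
      (by nlinarith [hKnn ω, hZnn ω, hb.le]) (hy_pos ω)
    have heq : (K ω + b * Z ω - y ω) / (2 * Real.sqrt (y ω))
        = b * (h ω * Z ω) - b * (h ω * W ω) := by
      simp only [hy, hh]
      have := hsqy_pos ω
      field_simp
      ring
    rw [heq] at ht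
    linarith
  have intA : Integrable (fun ω => Real.sqrt (K ω + b * Z ω)) μ := by
    apply Integrable.mono' ((hKint.add (hZint.const_mul b)).add (integrable_const 1))
    · exact Real.continuous_sqrt.comp_aestronglyMeasurable
        (hKm0.aestronglyMeasurable.add (hZm.const_mul b))
    · filter_upwards with ω
      rw [Real.norm_eq_abs, abs_of_nonneg (Real.sqrt_nonneg _)]
      have := aux_sqrt_le_one_add (K ω + b * Z ω) (by nlinarith [hKnn ω, hZnn ω, hb.le])
      simp only [Pi.add_apply]
      linarith
  have intB : Integrable (fun ω => Real.sqrt (y ω) + b * (h ω * Z ω) - b * (h ω * W ω)) μ :=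
    (int_sqrty.add (int_hZ.const_mul b)).sub (int_hW.const_mul b)
  have step1 : ∫ ω, Real.sqrt (K ω + b * Z ω) ∂μ
      ≤ ∫ ω, (Real.sqrt (y ω) + b * (h ω * Z ω) - b * (h ω * W ω)) ∂μ :=
    integral_mono intA intB ptwise
  have step2 : ∫ ω, (Real.sqrt (y ω) + b * (h ω * Z ω) - b * (h ω * W ω)) ∂μ
      = ∫ ω, Real.sqrt (y ω) ∂μ + b * ∫ ω, h ω * Z ω ∂μ - b * ∫ ω, h ω * W ω ∂μ := by
    have ha : ∫ ω, (Real.sqrt (y ω) + b * (h ω * Z ω) - b * (h ω * W ω)) ∂μ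
        = ∫ ω, (Real.sqrt (y ω) + b * (h ω * Z ω)) ∂μ - ∫ ω, b * (h ω * W ω) ∂μ :=
      integral_sub (int_sqrty.add (int_hZ.const_mul b)) (int_hW.const_mul b)
    have hbadd : ∫ ω, (Real.sqrt (y ω) + b * (h ω * Z ω)) ∂μ
        = ∫ ω, Real.sqrt (y ω) ∂μ + ∫ ω, b * (h ω * Z ω) ∂μ :=
      integral_add int_sqrty (int_hZ.const_mul b)
    rw [ha, hbadd, integral_const_mul, integral_const_mul]
  -- conditional expectation pull-out
  haveI : SigmaFinite (μ.trim hm) := by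
    haveI := isFiniteMeasure_trim hm (μ := μ)
    infer_instance
  have pull : μ[h * Z|m] =ᵐ[μ] h * μ[Z|m] :=
    condExp_stronglyMeasurable_mul_of_bound hm hhm hZint ((2 * Real.sqrt (b * D₀))⁻¹)
      (by filter_upwards with ω
          rw [Real.norm_eq_abs, abs_of_nonneg (hh_pos ω).le]
          exact hh_le ω)
  have e1 : ∫ ω, h ω * Z ω ∂μ = ∫ ω, h ω * (μ[Z|m]) ω ∂μ := by
    have h1 : ∫ ω, (μ[h * Z|m]) ω ∂μ = ∫ ω, (h * Z) ω ∂μ := integral_condExp hm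
    have h2 : ∫ ω, (μ[h * Z|m]) ω ∂μ = ∫ ω, (h * μ[Z|m]) ω ∂μ := integral_congr_ae pull
    exact (h1.symm.trans h2 : _)
  have int_hcondZ : Integrable (fun ω => h ω * (μ[Z|m]) ω) μ :=
    Integrable.congr integrable_condExp pull
  have e2 : ∫ ω, h ω * (μ[Z|m]) ω ∂μ ≤ ∫ ω, h ω * W ω ∂μ := by
    apply integral_mono_ae int_hcondZ int_hW
    filter_upwards [hcond] with ω hω
    exact mul_le_mul_of_nonneg_left hω (hh_pos ω).le
  have step3 : ∫ ω, h ω * Z ω ∂μ ≤ ∫ ω, h ω * W ω ∂μ := e1 ▸ e2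
  have step4 : ∫ ω, Real.sqrt (y ω) ∂μ
      ≤ ∫ ω, Real.sqrt (K ω + b * D₀) ∂μ + Real.sqrt (b * D₁) * ∫ ω, |G ω| ∂μ := by
    calc ∫ ω, Real.sqrt (y ω) ∂μ
        ≤ ∫ ω, (Real.sqrt (K ω + b * D₀) + Real.sqrt (b * D₁) * |G ω|) ∂μ :=
          integral_mono int_sqrty (int_sqrtKbD.add (hGabs.const_mul _)) ptwise2
      _ = _ := by
          rw [integral_add int_sqrtKbD (hGabs.const_mul _), integral_const_mul]
  have hb0 : 0 ≤ b := hb.le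
  nlinarith [step1, step2, step3, step4, mul_le_mul_of_nonneg_left step3 hb0]

set_option maxHeartbeats 1000000 in
/-- Lemma (Stage II bound on the denominator).  Under the affine noise variance
assumption alone, together with the recursion `v_{t,i} = β₂·v_{t−1,i} + (1−β₂)·g_{t,i}²`,
for every `T ≥ 1`:
`(1/T)·Σ_{t=1}^T E[√(β₂·‖v_{t−1}‖ + ζ)]
   ≤ √ζ + d·√(D₀ + ‖v₀‖) + (2·√(d·D₁)/√(1−β₂)) · (1/T)·Σ_{t=1}^T E[‖∇f(x_t)‖]`. -/
theorem rmsprop_stage2_denominator_bound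
    -- dimension and objective
    {d : ℕ} (hd : 1 ≤ d)
    (f : EuclideanSpace ℝ (Fin d) → ℝ) (hf : Differentiable ℝ f)
    -- probability space and stochastic gradients
    {Ω : Type} [MeasurableSpace Ω] (μ : Measure Ω) [IsProbabilityMeasure μ]
    (g : ℕ → Ω → EuclideanSpace ℝ (Fin d))
    (hgmeas : ∀ t, Measurable (g t))
    (hgL2 : ∀ t, MemLp (g t) 2 μ)
    -- filtration ℱ_t = σ(g₁, …, g_{t−1})
    (ℱ : ℕ → MeasurableSpace Ω)
    (hℱ : ∀ t, ℱ t = ⨆ s ∈ Finset.Ico 1 t, MeasurableSpace.comap (g s) inferInstance)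
    -- ℱ_t-measurable random points x_t, with deterministic x₀ = x₁
    (x : ℕ → Ω → EuclideanSpace ℝ (Fin d)) (x₁ : EuclideanSpace ℝ (Fin d))
    (hxmeas : ∀ t, Measurable[ℱ t] (x t))
    (hx1 : x 1 = fun _ => x₁) (hx0 : x 0 = x 1)
    -- second-moment recursion
    (ζ β₂ : ℝ) (hζ : 0 < ζ) (hβ₂ : β₂ ∈ Set.Ioo (0 : ℝ) 1)
    (v : ℕ → Ω → EuclideanSpace ℝ (Fin d)) (v₀ : EuclideanSpace ℝ (Fin d))
    (hv₀ : ∀ i, 0 < v₀ i) (hv0 : v 0 = fun _ => v₀)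
    (hvrec : ∀ t, 1 ≤ t → ∀ ω, ∀ i : Fin d,
      v t ω i = β₂ * v (t - 1) ω i + (1 - β₂) * (g t ω i) ^ 2)
    -- Assumption 2: coordinate-wise affine noise variance
    (D₀ D₁ : ℝ) (hD₀ : 0 < D₀) (hD₁ : 0 < D₁)
    (hmean : ∀ t, 1 ≤ t → ∀ i : Fin d,
      μ[fun ω => g t ω i|ℱ t] =ᵐ[μ] fun ω => gradient f (x t ω) i)
    (hvar : ∀ t, 1 ≤ t → ∀ i : Fin d, ∀ᵐ ω ∂μ,
      (μ[fun ω => (g t ω i) ^ 2|ℱ t]) ω ≤ D₀ + D₁ * (gradient f (x t ω) i) ^ 2)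
    (T : ℕ) (hT : 1 ≤ T) :
    (1 / (T : ℝ)) * ∑ t ∈ Finset.Icc 1 T, ∫ ω, Real.sqrt (β₂ * ‖v (t - 1) ω‖ + ζ) ∂μ
      ≤ Real.sqrt ζ + d * Real.sqrt (D₀ + ‖v₀‖)
        + (2 * Real.sqrt (d * D₁) / Real.sqrt (1 - β₂))
            * ((1 / (T : ℝ)) * ∑ t ∈ Finset.Icc 1 T, ∫ ω, ‖gradient f (x t ω)‖ ∂μ) := by
  obtain ⟨hβ0, hβ1⟩ := hβ₂
  have hβ1' : 0 < 1 - β₂ := by linarith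
  -- filtration facts
  have hle : ∀ t, ℱ t ≤ (inferInstance : MeasurableSpace Ω) := by
    intro t; rw [hℱ t]
    exact iSup₂_le fun s _ => (hgmeas s).comap_le
  have hmono : ∀ s t : ℕ, s ≤ t → ℱ s ≤ ℱ t := by
    intro s t hst; rw [hℱ s, hℱ t]
    exact biSup_mono fun r hr => by simp only [Finset.mem_Ico] at *; omega
  have hgF : ∀ s t : ℕ, 1 ≤ s → s < t → Measurable[ℱ t] (g s) := by
    intro s t h1 h2
    apply Measurable.of_comap_le
    rw [hℱ t]
    exact le_biSup (fun s => MeasurableSpace.comap (g s) inferInstance)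
      (Finset.mem_Ico.mpr ⟨h1, h2⟩)
  -- coordinates of g
  have hgim : ∀ t (i : Fin d), Measurable (fun ω => g t ω i) :=
    fun t i => (measurable_pi_apply i).comp ((WithLp.measurable_ofLp 2 _).comp (hgmeas t))
  have hgiL2 : ∀ t (i : Fin d), MemLp (fun ω => g t ω i) 2 μ := by
    intro t i
    refine MemLp.of_le (hgL2 t) (hgim t i).aestronglyMeasurable ?_
    filter_upwards with ω
    rw [Real.norm_eq_abs]
    exact aux_coord_le_norm (g t ω) i
  have hgsq_int : ∀ t (i : Fin d), Integrable (fun ω => (g t ω i)^2) μ := by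
    intro t i
    have := (hgiL2 t i).integrable_sq
    simpa [pow_two] using this
  -- properties of v
  have hv_props : ∀ n : ℕ, (∀ (i : Fin d) ω, 0 ≤ v n ω i)
      ∧ (∀ i : Fin d, Measurable[ℱ (n+1)] (fun ω => v n ω i))
      ∧ (∀ i : Fin d, Integrable (fun ω => v n ω i) μ) := by
    intro n
    induction n with
    | zero =>
      refine ⟨fun i ω => by rw [hv0]; exact (hv₀ i).le,
        fun i => by rw [hv0]; exact measurable_const,
        fun i => by rw [hv0]; exact integrable_const _⟩
    | succ n ih =>
      have hrec : ∀ ω (i : Fin d), v (n+1) ω i = β₂ * v n ω i + (1 - β₂) * (g (n+1) ω i)^2 :=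
        fun ω i => hvrec (n+1) (by omega) ω i
      refine ⟨fun i ω => ?_, fun i => ?_, fun i => ?_⟩
      · rw [hrec ω i]; nlinarith [ih.1 i ω, sq_nonneg (g (n+1) ω i)]
      · have h1 : Measurable[ℱ (n+2)] (fun ω => v n ω i) :=
          (ih.2.1 i).mono (hmono (n+1) (n+2) (by omega)) le_rfl
        have h2 : Measurable[ℱ (n+2)] (fun ω => g (n+1) ω i) :=
          (measurable_pi_apply i).comp ((WithLp.measurable_ofLp 2 _).comp (hgF (n+1) (n+2) (by omega) (by omega)))
        have : (fun ω => v (n+1) ω i)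
            = fun ω => β₂ * v n ω i + (1 - β₂) * (g (n+1) ω i)^2 := funext fun ω => hrec ω i
        rw [this]
        exact (h1.const_mul β₂).add ((h2.pow_const 2).const_mul (1 - β₂))
      · have : (fun ω => v (n+1) ω i)
            = fun ω => β₂ * v n ω i + (1 - β₂) * (g (n+1) ω i)^2 := funext fun ω => hrec ω i
        rw [this]
        exact ((ih.2.2 i).const_mul β₂).add ((hgsq_int (n+1) i).const_mul (1 - β₂))
  have hq0 : (0:ℝ) ≤ Real.sqrt β₂ := Real.sqrt_nonneg _
  have key : ∀ (n : ℕ) (i : Fin d) (a c : ℝ), 0 < a → 0 ≤ c →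
      ∫ ω, Real.sqrt (a * v n ω i + c) ∂μ
        ≤ Real.sqrt (a * (v₀ i + D₀) + c)
          + Real.sqrt ((1 - β₂) * D₁) * ∑ r ∈ Finset.Icc 1 n,
              Real.sqrt a * Real.sqrt β₂ ^ (n - r) * ∫ ω, |gradient f (x r ω) i| ∂μ := by
    intro n
    induction n with
    | zero =>
      intro i a c ha hc
      rw [hv0, show Finset.Icc 1 0 = (∅ : Finset ℕ) from Finset.Icc_eq_empty (by omega)]
      simp only [Finset.sum_empty, mul_zero, add_zero]
      rw [integral_const]
      simp only [measure_univ, probReal_univ, ENNReal.toReal_one, smul_eq_mul, one_mul]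
      exact Real.sqrt_le_sqrt (by nlinarith [mul_nonneg ha.le hD₀.le])
    | succ n ih =>
      intro i a c ha hc
      have s1 : 1 ≤ n + 1 := by omega
      set G : Ω → ℝ := μ[fun ω => g (n+1) ω i|ℱ (n+1)] with hG
      have hcond : ∀ᵐ ω ∂μ, (μ[fun ω => (g (n+1) ω i)^2|ℱ (n+1)]) ω
          ≤ D₀ + D₁ * (G ω)^2 := by
        filter_upwards [hvar (n+1) s1 i, hmean (n+1) s1 i] with ω h1 h2
        rw [hG, h2]
        exact h1
      have hKint : Integrable (fun ω => a * β₂ * v n ω i + c) μ :=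
        (((hv_props n).2.2 i).const_mul (a*β₂)).add (integrable_const c)
      have hKnn : ∀ ω, 0 ≤ a * β₂ * v n ω i + c := fun ω =>
        add_nonneg (mul_nonneg (mul_nonneg ha.le hβ0.le) ((hv_props n).1 i ω)) hc
      have hKm : StronglyMeasurable[ℱ (n+1)] (fun ω => a * β₂ * v n ω i + c) :=
        ((((hv_props n).2.1 i).const_mul (a*β₂)).add_const c).stronglyMeasurable
      have hstep := aux_step μ (hle (n+1)) (fun ω => (g (n+1) ω i)^2)
        (fun ω => a * β₂ * v n ω i + c) G (a * (1 - β₂)) D₀ D₁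
        (by positivity) hD₀ hD₁
        (hgsq_int (n+1) i) (fun ω => sq_nonneg _)
        ((hgim (n+1) i).pow_const 2).aestronglyMeasurable
        hKint hKnn hKm
        stronglyMeasurable_condExp integrable_condExp hcond
      -- rewrite LHS
      have lhs_eq : (fun ω => Real.sqrt (a * v (n+1) ω i + c))
          = fun ω => Real.sqrt ((a * β₂ * v n ω i + c)
              + a * (1 - β₂) * ((g (n+1) ω i)^2)) := by
        funext ω
        have hv' : v (n+1) ω i = β₂ * v n ω i + (1 - β₂) * (g (n+1) ω i)^2 :=
          hvrec (n+1) s1 ω i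
        congr 1
        rw [hv']; ring
      -- rewrite middle integrand
      have mid_eq : (fun ω => Real.sqrt ((a * β₂ * v n ω i + c) + a * (1 - β₂) * D₀))
          = fun ω => Real.sqrt (a * β₂ * v n ω i + (c + a * (1 - β₂) * D₀)) := by
        funext ω; congr 1; ring
      have hmid := ih i (a * β₂) (c + a * (1 - β₂) * D₀)
        (by positivity) (add_nonneg hc (mul_nonneg (mul_nonneg ha.le hβ1'.le) hD₀.le))
      -- the |G| integral equals the gradient integral
      have habsG : ∫ ω, |G ω| ∂μ = ∫ ω, |gradient f (x (n+1) ω) i| ∂μ := by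
        apply integral_congr_ae
        filter_upwards [hmean (n+1) s1 i] with ω h2
        rw [hG, h2]
      -- first deterministic term bound
      have hfirst : Real.sqrt (a * β₂ * (v₀ i + D₀) + (c + a * (1 - β₂) * D₀))
          ≤ Real.sqrt (a * (v₀ i + D₀) + c) :=
        Real.sqrt_le_sqrt (by nlinarith [mul_nonneg (mul_nonneg ha.le (hv₀ i).le) hβ1'.le])
      -- sum reindexing
      have hsum_eq : ∑ r ∈ Finset.Icc 1 n,
            Real.sqrt (a * β₂) * Real.sqrt β₂ ^ (n - r) * ∫ ω, |gradient f (x r ω) i| ∂μ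
          = ∑ r ∈ Finset.Icc 1 n,
            Real.sqrt a * Real.sqrt β₂ ^ (n + 1 - r) * ∫ ω, |gradient f (x r ω) i| ∂μ := by
        apply Finset.sum_congr rfl
        intro r hr
        rw [Finset.mem_Icc] at hr
        have h1 : Real.sqrt (a * β₂) = Real.sqrt a * Real.sqrt β₂ := Real.sqrt_mul ha.le _
        have h2 : n + 1 - r = (n - r) + 1 := by omega
        rw [h1, h2, pow_succ]
        ring
      have hcoef : Real.sqrt (a * (1 - β₂) * D₁)
          = Real.sqrt ((1 - β₂) * D₁) * (Real.sqrt a * Real.sqrt β₂ ^ (n + 1 - (n+1))) := by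
        rw [show n + 1 - (n+1) = 0 from by omega, pow_zero, mul_one,
          show a * (1 - β₂) * D₁ = a * ((1 - β₂) * D₁) from by ring,
          Real.sqrt_mul ha.le]
        ring
      rw [lhs_eq]
      calc ∫ ω, Real.sqrt ((a * β₂ * v n ω i + c) + a * (1 - β₂) * ((g (n+1) ω i)^2)) ∂μ
          ≤ ∫ ω, Real.sqrt ((a * β₂ * v n ω i + c) + a * (1 - β₂) * D₀) ∂μ
            + Real.sqrt (a * (1 - β₂) * D₁) * ∫ ω, |G ω| ∂μ := hstep
        _ ≤ (Real.sqrt (a * β₂ * (v₀ i + D₀) + (c + a * (1 - β₂) * D₀))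
              + Real.sqrt ((1 - β₂) * D₁) * ∑ r ∈ Finset.Icc 1 n,
                Real.sqrt (a * β₂) * Real.sqrt β₂ ^ (n - r) * ∫ ω, |gradient f (x r ω) i| ∂μ)
            + Real.sqrt (a * (1 - β₂) * D₁) * ∫ ω, |G ω| ∂μ := by
            rw [mid_eq]
            exact add_le_add_left hmid _
        _ ≤ Real.sqrt (a * (v₀ i + D₀) + c)
            + Real.sqrt ((1 - β₂) * D₁) * ∑ r ∈ Finset.Icc 1 (n+1),
                Real.sqrt a * Real.sqrt β₂ ^ (n + 1 - r) * ∫ ω, |gradient f (x r ω) i| ∂μ := by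
            rw [Finset.sum_Icc_succ_top s1, habsG, hsum_eq, hcoef]
            have hring : Real.sqrt ((1 - β₂) * D₁) *
                  (∑ r ∈ Finset.Icc 1 n, Real.sqrt a * Real.sqrt β₂ ^ (n + 1 - r)
                      * ∫ ω, |gradient f (x r ω) i| ∂μ
                    + Real.sqrt a * Real.sqrt β₂ ^ (n + 1 - (n+1))
                      * ∫ ω, |gradient f (x (n+1) ω) i| ∂μ)
                = Real.sqrt ((1 - β₂) * D₁) * ∑ r ∈ Finset.Icc 1 n,
                    Real.sqrt a * Real.sqrt β₂ ^ (n + 1 - r) * ∫ ω, |gradient f (x r ω) i| ∂μ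
                  + Real.sqrt ((1 - β₂) * D₁) * (Real.sqrt a * Real.sqrt β₂ ^ (n + 1 - (n+1)))
                      * ∫ ω, |gradient f (x (n+1) ω) i| ∂μ := by ring
            rw [hring]
            linarith [hfirst]
  -- gradient integrability and coordinate-sum bound
  have hgradfact : ∀ r : ℕ, 1 ≤ r →
      Integrable (fun ω => ‖gradient f (x r ω)‖) μ ∧
      (∑ i : Fin d, ∫ ω, |gradient f (x r ω) i| ∂μ)
        ≤ Real.sqrt d * ∫ ω, ‖gradient f (x r ω)‖ ∂μ := by
    intro r hr
    set G : Fin d → Ω → ℝ := fun i => μ[fun ω => g r ω i|ℱ r] with hGdef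
    have hae : ∀ᵐ ω ∂μ, ∀ i : Fin d, gradient f (x r ω) i = G i ω := by
      rw [ae_all_iff]
      intro i
      filter_upwards [hmean r hr i] with ω h
      exact h.symm
    set N : Ω → ℝ := fun ω => Real.sqrt (∑ i, (G i ω)^2) with hNdef
    have hGm : ∀ i, Measurable (G i) := fun i =>
      (stronglyMeasurable_condExp.mono (hle r)).measurable
    have hGint : ∀ i, Integrable (G i) μ := fun i => integrable_condExp
    have hNm : Measurable N :=
      (Finset.measurable_sum Finset.univ fun i _ => (hGm i).pow_const 2).sqrt
    have hNint : Integrable N μ := by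
      apply Integrable.mono' (integrable_finset_sum Finset.univ fun i _ => (hGint i).abs)
      · exact hNm.aestronglyMeasurable
      · filter_upwards with ω
        rw [Real.norm_eq_abs, abs_of_nonneg (Real.sqrt_nonneg _)]
        exact aux_sqrt_sum_sq_le_sum_abs _
    have hNeq : (fun ω => ‖gradient f (x r ω)‖) =ᵐ[μ] N := by
      filter_upwards [hae] with ω hω
      rw [EuclideanSpace.norm_eq]
      congr 1
      refine Finset.sum_congr rfl fun i _ => ?_
      rw [hω i, Real.norm_eq_abs, sq_abs]
    have hint : Integrable (fun ω => ‖gradient f (x r ω)‖) μ := hNint.congr hNeq.symm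
    refine ⟨hint, ?_⟩
    have e1 : ∀ i : Fin d, ∫ ω, |gradient f (x r ω) i| ∂μ = ∫ ω, |G i ω| ∂μ := fun i =>
      integral_congr_ae ((hmean r hr i).symm.mono fun ω h => congrArg (fun z : ℝ => |z|) h)
    calc ∑ i : Fin d, ∫ ω, |gradient f (x r ω) i| ∂μ
        = ∫ ω, ∑ i : Fin d, |G i ω| ∂μ := by
          rw [integral_finset_sum Finset.univ fun i _ => (hGint i).abs]
          exact Finset.sum_congr rfl fun i _ => e1 i
      _ ≤ ∫ ω, Real.sqrt d * N ω ∂μ := by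
          apply integral_mono (integrable_finset_sum _ fun i _ => (hGint i).abs)
            (hNint.const_mul _)
          intro ω
          exact aux_sum_abs_le_sqrt_card (fun i => G i ω)
      _ = Real.sqrt d * ∫ ω, N ω ∂μ := integral_const_mul _ _
      _ = Real.sqrt d * ∫ ω, ‖gradient f (x r ω)‖ ∂μ := by rw [integral_congr_ae hNeq]
  -- per time-step bound
  have pert : ∀ n : ℕ,
      ∫ ω, Real.sqrt (β₂ * ‖v n ω‖ + ζ) ∂μ
        ≤ Real.sqrt ζ + d * Real.sqrt (D₀ + ‖v₀‖)
          + Real.sqrt ((1 - β₂) * D₁) * Real.sqrt d * ∑ r ∈ Finset.Icc 1 n,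
              Real.sqrt β₂ ^ (n - r) * ∫ ω, ‖gradient f (x r ω)‖ ∂μ := by
    intro n
    obtain ⟨hvnn, hvm, hvint⟩ := hv_props n
    have hnormle : ∀ ω, β₂ * ‖v n ω‖ + ζ ≤ ζ + ∑ i, v n ω i := by
      intro ω
      have h1 : ‖v n ω‖ ≤ ∑ i, v n ω i := aux_norm_le_sum _ (fun i => hvnn i ω)
      have h2 : 0 ≤ ‖v n ω‖ := norm_nonneg _
      nlinarith [h1, h2, hβ0.le, hβ1]
    have hpt : ∀ ω, Real.sqrt (β₂ * ‖v n ω‖ + ζ)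
        ≤ Real.sqrt ζ + ∑ i, Real.sqrt (v n ω i) := by
      intro ω
      calc Real.sqrt (β₂ * ‖v n ω‖ + ζ) ≤ Real.sqrt (ζ + ∑ i, v n ω i) :=
            Real.sqrt_le_sqrt (hnormle ω)
        _ ≤ Real.sqrt ζ + Real.sqrt (∑ i, v n ω i) :=
            aux_sqrt_add_le _ _ hζ.le (Finset.sum_nonneg fun i _ => hvnn i ω)
        _ ≤ Real.sqrt ζ + ∑ i, Real.sqrt (v n ω i) :=
            add_le_add_right (aux_sqrt_sum_le _ _ fun i _ => hvnn i ω) _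
    have hsint : ∀ i : Fin d, Integrable (fun ω => Real.sqrt (v n ω i)) μ := by
      intro i
      apply Integrable.mono' ((integrable_const (1:ℝ)).add (hvint i))
      · exact (((hvm i).mono (hle (n+1)) le_rfl).sqrt).aestronglyMeasurable
      · filter_upwards with ω
        rw [Real.norm_eq_abs, abs_of_nonneg (Real.sqrt_nonneg _)]
        simpa using aux_sqrt_le_one_add _ (hvnn i ω)
    have hrhs_int : Integrable (fun ω => Real.sqrt ζ + ∑ i, Real.sqrt (v n ω i)) μ :=
      (integrable_const _).add (integrable_finset_sum Finset.univ fun i _ => hsint i)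
    have hlhsm : Measurable fun ω => Real.sqrt (β₂ * ‖v n ω‖ + ζ) := by
      have h1 : Measurable fun ω => ‖v n ω‖ := by
        have he : (fun ω => ‖v n ω‖) = fun ω => Real.sqrt (∑ i, ‖v n ω i‖^2) :=
          funext fun ω => EuclideanSpace.norm_eq _
        rw [he]
        exact (Finset.measurable_sum Finset.univ fun i _ =>
          (((hvm i).mono (hle (n+1)) le_rfl).norm.pow_const 2)).sqrt
      exact ((h1.const_mul β₂).add_const ζ).sqrt
    have hlhsint : Integrable (fun ω => Real.sqrt (β₂ * ‖v n ω‖ + ζ)) μ := by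
      apply Integrable.mono' hrhs_int
      · exact hlhsm.aestronglyMeasurable
      · filter_upwards with ω
        rw [Real.norm_eq_abs, abs_of_nonneg (Real.sqrt_nonneg _)]
        exact hpt ω
    have heq1 : ∫ ω, (Real.sqrt ζ + ∑ i, Real.sqrt (v n ω i)) ∂μ
        = Real.sqrt ζ + ∑ i : Fin d, ∫ ω, Real.sqrt (v n ω i) ∂μ := by
      rw [integral_add (integrable_const _)
          (integrable_finset_sum Finset.univ fun i _ => hsint i),
        integral_const, integral_finset_sum Finset.univ fun i _ => hsint i]
      simp
    have step1 : ∫ ω, Real.sqrt (β₂ * ‖v n ω‖ + ζ) ∂μ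
        ≤ Real.sqrt ζ + ∑ i : Fin d, ∫ ω, Real.sqrt (v n ω i) ∂μ :=
      (integral_mono hlhsint hrhs_int hpt).trans_eq heq1
    have hperi : ∀ i : Fin d, ∫ ω, Real.sqrt (v n ω i) ∂μ
        ≤ Real.sqrt (v₀ i + D₀) + Real.sqrt ((1 - β₂) * D₁)
            * ∑ r ∈ Finset.Icc 1 n, Real.sqrt β₂ ^ (n - r)
                * ∫ ω, |gradient f (x r ω) i| ∂μ := by
      intro i
      have hkey := key n i 1 0 one_pos le_rfl
      simpa [Real.sqrt_one] using hkey
    have hswap : ∑ i : Fin d, (Real.sqrt ((1 - β₂) * D₁)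
          * ∑ r ∈ Finset.Icc 1 n, Real.sqrt β₂ ^ (n - r)
              * ∫ ω, |gradient f (x r ω) i| ∂μ)
        = Real.sqrt ((1 - β₂) * D₁) * ∑ r ∈ Finset.Icc 1 n, Real.sqrt β₂ ^ (n - r)
            * ∑ i : Fin d, ∫ ω, |gradient f (x r ω) i| ∂μ := by
      rw [← Finset.mul_sum]
      congr 1
      rw [Finset.sum_comm]
      exact Finset.sum_congr rfl fun r _ => by rw [Finset.mul_sum]
    have hfirstsum : ∑ i : Fin d, Real.sqrt (v₀ i + D₀)
        ≤ (d:ℝ) * Real.sqrt (D₀ + ‖v₀‖) := by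
      calc ∑ i : Fin d, Real.sqrt (v₀ i + D₀) ≤ ∑ _i : Fin d, Real.sqrt (D₀ + ‖v₀‖) :=
            Finset.sum_le_sum fun i _ => Real.sqrt_le_sqrt (by
              have h1 := aux_coord_le_norm v₀ i
              have h2 := le_abs_self (v₀ i)
              linarith)
        _ = (d:ℝ) * Real.sqrt (D₀ + ‖v₀‖) := by
            rw [Finset.sum_const, Finset.card_univ, Fintype.card_fin, nsmul_eq_mul]
    calc ∫ ω, Real.sqrt (β₂ * ‖v n ω‖ + ζ) ∂μ
        ≤ Real.sqrt ζ + ∑ i : Fin d, ∫ ω, Real.sqrt (v n ω i) ∂μ := step1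
      _ ≤ Real.sqrt ζ + (∑ i : Fin d, Real.sqrt (v₀ i + D₀)
            + Real.sqrt ((1 - β₂) * D₁) * ∑ r ∈ Finset.Icc 1 n, Real.sqrt β₂ ^ (n - r)
                * ∑ i : Fin d, ∫ ω, |gradient f (x r ω) i| ∂μ) := by
          apply add_le_add_right
          calc ∑ i : Fin d, ∫ ω, Real.sqrt (v n ω i) ∂μ
              ≤ ∑ i : Fin d, (Real.sqrt (v₀ i + D₀) + Real.sqrt ((1 - β₂) * D₁)
                  * ∑ r ∈ Finset.Icc 1 n, Real.sqrt β₂ ^ (n - r)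
                      * ∫ ω, |gradient f (x r ω) i| ∂μ) :=
                Finset.sum_le_sum fun i _ => hperi i
            _ = _ := by rw [Finset.sum_add_distrib, hswap]
      _ ≤ Real.sqrt ζ + ((d:ℝ) * Real.sqrt (D₀ + ‖v₀‖)
            + Real.sqrt ((1 - β₂) * D₁) * ∑ r ∈ Finset.Icc 1 n, Real.sqrt β₂ ^ (n - r)
                * (Real.sqrt d * ∫ ω, ‖gradient f (x r ω)‖ ∂μ)) := by
          apply add_le_add_right
          apply add_le_add hfirstsum
          apply mul_le_mul_of_nonneg_left ?_ (Real.sqrt_nonneg _)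
          apply Finset.sum_le_sum
          intro r hrm
          have hr1 : 1 ≤ r := (Finset.mem_Icc.mp hrm).1
          exact mul_le_mul_of_nonneg_left (hgradfact r hr1).2 (pow_nonneg hq0 _)
      _ = Real.sqrt ζ + d * Real.sqrt (D₀ + ‖v₀‖)
            + Real.sqrt ((1 - β₂) * D₁) * Real.sqrt d * ∑ r ∈ Finset.Icc 1 n,
                Real.sqrt β₂ ^ (n - r) * ∫ ω, ‖gradient f (x r ω)‖ ∂μ := by
          have he : ∑ r ∈ Finset.Icc 1 n, Real.sqrt β₂ ^ (n - r)
                * (Real.sqrt d * ∫ ω, ‖gradient f (x r ω)‖ ∂μ)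
              = Real.sqrt d * ∑ r ∈ Finset.Icc 1 n, Real.sqrt β₂ ^ (n - r)
                  * ∫ ω, ‖gradient f (x r ω)‖ ∂μ := by
            rw [Finset.mul_sum]
            exact Finset.sum_congr rfl fun r _ => by ring
          rw [he]
          ring
  -- assembly over t
  have hT0 : (0:ℝ) < (T:ℝ) := by exact_mod_cast hT
  have hAGnn : ∀ r : ℕ, 0 ≤ ∫ ω, ‖gradient f (x r ω)‖ ∂μ := fun r =>
    integral_nonneg fun ω => norm_nonneg _
  have hq1 : Real.sqrt β₂ < 1 := by
    rw [show (1:ℝ) = Real.sqrt 1 from Real.sqrt_one.symm]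
    exact Real.sqrt_lt_sqrt hβ0.le hβ1
  have hqq : Real.sqrt β₂ * Real.sqrt β₂ = β₂ := Real.mul_self_sqrt hβ0.le
  have hS : ∑ t ∈ Finset.Icc 1 T, ∑ r ∈ Finset.Icc 1 (t-1),
        Real.sqrt β₂ ^ (t-1-r) * ∫ ω, ‖gradient f (x r ω)‖ ∂μ
      ≤ (1/(1 - Real.sqrt β₂)) * ∑ r ∈ Finset.Icc 1 T, ∫ ω, ‖gradient f (x r ω)‖ ∂μ := by
    have hswap2 : ∑ t ∈ Finset.Icc 1 T, ∑ r ∈ Finset.Icc 1 (t-1),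
          Real.sqrt β₂ ^ (t-1-r) * ∫ ω, ‖gradient f (x r ω)‖ ∂μ
        = ∑ r ∈ Finset.Icc 1 T, ∑ t ∈ Finset.Icc (r+1) T,
            Real.sqrt β₂ ^ (t-1-r) * ∫ ω, ‖gradient f (x r ω)‖ ∂μ :=
      Finset.sum_comm' (by intro a b; simp only [Finset.mem_Icc]; omega)
    rw [hswap2, Finset.mul_sum]
    apply Finset.sum_le_sum
    intro r _
    rw [← Finset.sum_mul]
    apply mul_le_mul_of_nonneg_right ?_ (hAGnn r)
    calc ∑ t ∈ Finset.Icc (r+1) T, Real.sqrt β₂ ^ (t-1-r)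
        = ∑ k ∈ Finset.range (T+1-(r+1)), Real.sqrt β₂ ^ ((r+1+k)-1-r) := by
          rw [show Finset.Icc (r+1) T = Finset.Ico (r+1) (T+1) from by
            rw [Finset.Ico_add_one_right_eq_Icc], Finset.sum_Ico_eq_sum_range]
      _ = ∑ k ∈ Finset.range (T+1-(r+1)), Real.sqrt β₂ ^ k :=
          Finset.sum_congr rfl fun k _ => by congr 1; omega
      _ ≤ 1/(1 - Real.sqrt β₂) := aux_geom_le hq0 hq1 _
  have hCoef : Real.sqrt ((1 - β₂) * D₁) * Real.sqrt d * (1/(1 - Real.sqrt β₂))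
      ≤ 2 * Real.sqrt (d * D₁) / Real.sqrt (1 - β₂) := by
    have hs : 0 < Real.sqrt (1 - β₂) := Real.sqrt_pos.mpr hβ1'
    have hss : Real.sqrt (1 - β₂) * Real.sqrt (1 - β₂) = 1 - β₂ :=
      Real.mul_self_sqrt hβ1'.le
    have h1 : Real.sqrt ((1 - β₂) * D₁) = Real.sqrt (1 - β₂) * Real.sqrt D₁ :=
      Real.sqrt_mul hβ1'.le _
    have h2 : Real.sqrt ((d:ℝ) * D₁) = Real.sqrt d * Real.sqrt D₁ :=
      Real.sqrt_mul (by positivity) _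
    have h3 : 0 < 1 - Real.sqrt β₂ := by linarith
    rw [h1, h2, mul_one_div, div_le_div_iff₀ h3 hs]
    have hd1 : (0:ℝ) ≤ Real.sqrt d * Real.sqrt D₁ :=
      mul_nonneg (Real.sqrt_nonneg _) (Real.sqrt_nonneg _)
    have hkey2 : Real.sqrt (1 - β₂) * Real.sqrt (1 - β₂) ≤ 2 * (1 - Real.sqrt β₂) := by
      rw [hss]
      nlinarith [sq_nonneg (1 - Real.sqrt β₂), hqq]
    nlinarith [mul_le_mul_of_nonneg_left hkey2 hd1]
  have hCnn : 0 ≤ Real.sqrt ((1 - β₂) * D₁) * Real.sqrt d :=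
    mul_nonneg (Real.sqrt_nonneg _) (Real.sqrt_nonneg _)
  have hsum_t : ∑ t ∈ Finset.Icc 1 T, ∫ ω, Real.sqrt (β₂ * ‖v (t-1) ω‖ + ζ) ∂μ
      ≤ (T:ℝ) * (Real.sqrt ζ + d * Real.sqrt (D₀ + ‖v₀‖))
        + (Real.sqrt ((1 - β₂) * D₁) * Real.sqrt d)
            * ((1/(1 - Real.sqrt β₂))
                * ∑ r ∈ Finset.Icc 1 T, ∫ ω, ‖gradient f (x r ω)‖ ∂μ) := by
    calc ∑ t ∈ Finset.Icc 1 T, ∫ ω, Real.sqrt (β₂ * ‖v (t-1) ω‖ + ζ) ∂μ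
        ≤ ∑ t ∈ Finset.Icc 1 T, (Real.sqrt ζ + d * Real.sqrt (D₀ + ‖v₀‖)
            + Real.sqrt ((1 - β₂) * D₁) * Real.sqrt d * ∑ r ∈ Finset.Icc 1 (t-1),
                Real.sqrt β₂ ^ (t-1-r) * ∫ ω, ‖gradient f (x r ω)‖ ∂μ) :=
          Finset.sum_le_sum fun t _ => pert (t-1)
      _ = (T:ℝ) * (Real.sqrt ζ + d * Real.sqrt (D₀ + ‖v₀‖))
          + (Real.sqrt ((1 - β₂) * D₁) * Real.sqrt d)
              * ∑ t ∈ Finset.Icc 1 T, ∑ r ∈ Finset.Icc 1 (t-1),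
                  Real.sqrt β₂ ^ (t-1-r) * ∫ ω, ‖gradient f (x r ω)‖ ∂μ := by
          rw [Finset.sum_add_distrib, Finset.sum_const, ← Finset.mul_sum, Nat.card_Icc]
          simp only [Nat.add_sub_cancel, nsmul_eq_mul]
      _ ≤ _ := by
          apply add_le_add_right
          exact mul_le_mul_of_nonneg_left hS hCnn
  have hAvg : 0 ≤ (1/(T:ℝ)) * ∑ t ∈ Finset.Icc 1 T, ∫ ω, ‖gradient f (x t ω)‖ ∂μ :=
    mul_nonneg (by positivity) (Finset.sum_nonneg fun t _ => hAGnn t)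
  have hTne : (T:ℝ) ≠ 0 := ne_of_gt hT0
  have hqne : (1 - Real.sqrt β₂) ≠ 0 := by
    have h3 : 0 < 1 - Real.sqrt β₂ := by linarith
    exact ne_of_gt h3
  calc (1/(T:ℝ)) * ∑ t ∈ Finset.Icc 1 T, ∫ ω, Real.sqrt (β₂ * ‖v (t-1) ω‖ + ζ) ∂μ
      ≤ (1/(T:ℝ)) * ((T:ℝ) * (Real.sqrt ζ + d * Real.sqrt (D₀ + ‖v₀‖))
          + (Real.sqrt ((1 - β₂) * D₁) * Real.sqrt d)
              * ((1/(1 - Real.sqrt β₂))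
                  * ∑ r ∈ Finset.Icc 1 T, ∫ ω, ‖gradient f (x r ω)‖ ∂μ)) :=
        mul_le_mul_of_nonneg_left hsum_t (by positivity)
    _ = Real.sqrt ζ + d * Real.sqrt (D₀ + ‖v₀‖)
        + (Real.sqrt ((1 - β₂) * D₁) * Real.sqrt d * (1/(1 - Real.sqrt β₂)))
            * ((1/(T:ℝ)) * ∑ t ∈ Finset.Icc 1 T, ∫ ω, ‖gradient f (x t ω)‖ ∂μ) := by
        field_simp
    _ ≤ Real.sqrt ζ + d * Real.sqrt (D₀ + ‖v₀‖)
        + (2 * Real.sqrt (d * D₁) / Real.sqrt (1 - β₂))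
            * ((1/(T:ℝ)) * ∑ t ∈ Finset.Icc 1 T, ∫ ω, ‖gradient f (x t ω)‖ ∂μ) := by
        apply add_le_add_right
        exact mul_le_mul_of_nonneg_right hCoef hAvg
end

section
/- Recursive second-moment bound (key step of the Stage II lemma). Under Assumption 2 and the recursion v_{t,i} = β₂·v_{t−1,i} + (1−β₂)·g_{t,i}², for every t ≥ 1 and every coordinate i ∈ {1,…,d}: E[√(β₂·v_{t−1,i})] ≤ √(D₀ + ‖v₀‖) + Σ_{j=1}^{t−1} √(β₂^j·(1−β₂)·D₁) · E[|∂ᵢf(x_{t−j})|]. -/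
open MeasureTheory Finset

private lemma sqrt_le_one_add (y : ℝ) (hy : 0 ≤ y) : Real.sqrt y ≤ 1 + y := by
  nlinarith [Real.sq_sqrt hy, Real.sqrt_nonneg y, sq_nonneg (Real.sqrt y - 1)]

private lemma sqrt_le_sqrt_add_div (y z : ℝ) (hy : 0 ≤ y) (hz : 0 < z) :
    Real.sqrt y ≤ Real.sqrt z + (y - z) / (2 * Real.sqrt z) := by
  have hsz : 0 < Real.sqrt z := Real.sqrt_pos.2 hz
  rw [show Real.sqrt z + (y - z) / (2 * Real.sqrt z)
      = (y + z) / (2 * Real.sqrt z) by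
    field_simp; nlinarith [Real.sq_sqrt hz.le]]
  rw [le_div_iff₀ (by positivity)]
  nlinarith [sq_nonneg (Real.sqrt y - Real.sqrt z), Real.sq_sqrt hy, Real.sq_sqrt hz.le,
    Real.sqrt_nonneg y, Real.sqrt_nonneg z]

private lemma sqrt_add_le (u w : ℝ) (hu : 0 ≤ u) (hw : 0 ≤ w) :
    Real.sqrt (u + w) ≤ Real.sqrt u + Real.sqrt w := by
  have h := Real.sqrt_le_sqrt (show u + w ≤ (Real.sqrt u + Real.sqrt w) ^ 2 by
    nlinarith [Real.sq_sqrt hu, Real.sq_sqrt hw, Real.sqrt_nonneg u, Real.sqrt_nonneg w,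
      mul_nonneg (Real.sqrt_nonneg u) (Real.sqrt_nonneg w)])
  rwa [Real.sqrt_sq (by positivity)] at h

/-- Conditional peeling step. -/
private lemma cond_step {Ω : Type} {m₀ : MeasurableSpace Ω} (μ : Measure Ω)
    [IsProbabilityMeasure μ] {m : MeasurableSpace Ω} (hm : m ≤ m₀)
    (W X h : Ω → ℝ) (c D₀ D₁ : ℝ)
    (hc : 0 < c) (hD₀ : 0 < D₀) (hD₁ : 0 < D₁)
    (hW : StronglyMeasurable[m] W) (hWnn : ∀ ω, 0 ≤ W ω) (hWint : Integrable W μ)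
    (hX : Integrable X μ) (hXnn : ∀ ω, 0 ≤ X ω)
    (hh : StronglyMeasurable[m] h) (hhint : Integrable h μ)
    (hvar : ∀ᵐ ω ∂μ, (μ[X|m]) ω ≤ D₀ + D₁ * (h ω) ^ 2) :
    ∫ ω, Real.sqrt (W ω + c * X ω) ∂μ
      ≤ ∫ ω, Real.sqrt (W ω + c * D₀) ∂μ
        + Real.sqrt (c * D₁) * ∫ ω, |h ω| ∂μ := by
  haveI : SigmaFinite (μ.trim hm) := (isFiniteMeasure_trim hm).toSigmaFinite
  set B : Ω → ℝ := fun ω => D₀ + D₁ * (h ω) ^ 2 with hBdef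
  have hh2 : StronglyMeasurable[m] (fun ω => (h ω) ^ 2) := by
    exact hh.pow 2
  have hBm : StronglyMeasurable[m] B :=
    stronglyMeasurable_const.add (hh2.const_mul D₁)
  have hBlb : ∀ ω, D₀ ≤ B ω := fun ω => by
    have := sq_nonneg (h ω); simp only [hBdef]; nlinarith
  have hBnn : ∀ ω, 0 ≤ B ω := fun ω => hD₀.le.trans (hBlb ω)
  set S : Ω → ℝ := fun ω => W ω + c * B ω with hSdef
  have hSm : StronglyMeasurable[m] S := hW.add (hBm.const_mul c)
  have hSlb : ∀ ω, c * D₀ ≤ S ω := fun ω => by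
    have h1 := hWnn ω; have h2 := hBlb ω; simp only [hSdef]; nlinarith
  have hcD₀ : 0 < c * D₀ := by positivity
  have hSpos : ∀ ω, 0 < S ω := fun ω => hcD₀.trans_le (hSlb ω)
  set φ : Ω → ℝ := fun ω => 1 / (2 * Real.sqrt (S ω)) with hφdef
  have hφm : StronglyMeasurable[m] φ := by
    apply Measurable.stronglyMeasurable
    exact Measurable.div measurable_const
      ((Real.continuous_sqrt.measurable.comp hSm.measurable).const_mul 2)
  have hφnn : ∀ ω, 0 ≤ φ ω := fun ω => by
    have := Real.sqrt_nonneg (S ω); positivity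
  have hφbdd : ∀ ω, φ ω ≤ 1 / (2 * Real.sqrt (c * D₀)) := fun ω => by
    have h1 : Real.sqrt (c * D₀) ≤ Real.sqrt (S ω) := Real.sqrt_le_sqrt (hSlb ω)
    have h2 : 0 < Real.sqrt (c * D₀) := Real.sqrt_pos.2 hcD₀
    exact one_div_le_one_div_of_le (by linarith) (by linarith)
  have hWm0 : AEStronglyMeasurable[m₀] W μ := (hW.mono hm).aestronglyMeasurable
  have hhm0 : AEStronglyMeasurable[m₀] h μ := (hh.mono hm).aestronglyMeasurable
  have hBm0 : AEStronglyMeasurable[m₀] B μ := (hBm.mono hm).aestronglyMeasurable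
  have hφm0 : AEStronglyMeasurable[m₀] φ μ := (hφm.mono hm).aestronglyMeasurable
  -- pointwise bounds
  have hpt1 : ∀ ω, Real.sqrt (W ω + c * X ω)
      ≤ Real.sqrt (S ω) + (c * (φ ω * X ω) - c * (φ ω * B ω)) := fun ω => by
    have key := sqrt_le_sqrt_add_div (W ω + c * X ω) (S ω)
      (by have := hWnn ω; have := hXnn ω; positivity) (hSpos ω)
    have e : (W ω + c * X ω - S ω) / (2 * Real.sqrt (S ω))
        = c * (φ ω * X ω) - c * (φ ω * B ω) := by
      simp only [hφdef, hSdef]; ring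
    rw [e] at key; exact key
  have hpt2 : ∀ ω, Real.sqrt (S ω)
      ≤ Real.sqrt (W ω + c * D₀) + Real.sqrt (c * D₁) * |h ω| := fun ω => by
    have h1 : S ω = (W ω + c * D₀) + (c * D₁) * (h ω) ^ 2 := by
      simp only [hSdef, hBdef]; ring
    have h2 := sqrt_add_le (W ω + c * D₀) ((c * D₁) * (h ω) ^ 2)
      (by have := hWnn ω; positivity) (by positivity)
    have h3 : Real.sqrt ((c * D₁) * (h ω) ^ 2) = Real.sqrt (c * D₁) * |h ω| := by
      rw [Real.sqrt_mul (by positivity), Real.sqrt_sq_eq_abs]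
    rw [h1]; rw [h3] at h2; exact h2
  -- integrabilities
  have habs : Integrable (fun ω => |h ω|) μ := hhint.abs
  have habs' : Integrable (fun ω => Real.sqrt (c * D₁) * |h ω|) μ := habs.const_mul _
  have hint1 : Integrable (fun ω => Real.sqrt (W ω + c * X ω)) μ := by
    refine Integrable.mono' (g := fun ω => 1 + (W ω + c * X ω))
      ((integrable_const (1:ℝ)).add (hWint.add (hX.const_mul c)))
      (Real.continuous_sqrt.comp_aestronglyMeasurable (hWm0.add (hX.1.const_mul c)))
      (Filter.Eventually.of_forall fun ω => ?_)
    rw [Real.norm_eq_abs, abs_of_nonneg (Real.sqrt_nonneg _)]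
    exact sqrt_le_one_add _ (by have := hWnn ω; have := hXnn ω; positivity)
  have hintWD : Integrable (fun ω => Real.sqrt (W ω + c * D₀)) μ := by
    refine Integrable.mono' (g := fun ω => 1 + (W ω + c * D₀))
      ((integrable_const (1:ℝ)).add (hWint.add (integrable_const _)))
      (Real.continuous_sqrt.comp_aestronglyMeasurable (hWm0.add aestronglyMeasurable_const))
      (Filter.Eventually.of_forall fun ω => ?_)
    rw [Real.norm_eq_abs, abs_of_nonneg (Real.sqrt_nonneg _)]
    exact sqrt_le_one_add _ (by have := hWnn ω; positivity)
  have hintφX : Integrable (fun ω => φ ω * X ω) μ :=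
    hX.bdd_mul (c := 1 / (2 * Real.sqrt (c * D₀))) hφm0 (Filter.Eventually.of_forall fun ω => by
      rw [Real.norm_eq_abs, abs_of_nonneg (hφnn ω)]; exact hφbdd ω)
  have hintφB : Integrable (fun ω => φ ω * B ω) μ := by
    refine Integrable.mono'
      (g := fun ω => (Real.sqrt D₀ + Real.sqrt D₁ * |h ω|) / (2 * Real.sqrt c))
      (((integrable_const _).add (habs.const_mul _)).div_const _)
      (hφm0.mul hBm0) (Filter.Eventually.of_forall fun ω => ?_)
    rw [Real.norm_eq_abs, abs_of_nonneg (mul_nonneg (hφnn ω) (hBnn ω))]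
    have hsc : 0 < Real.sqrt c := Real.sqrt_pos.2 hc
    have hBpos : 0 < B ω := hD₀.trans_le (hBlb ω)
    have hsB : 0 < Real.sqrt (B ω) := Real.sqrt_pos.2 hBpos
    have hcBpos : 0 < Real.sqrt (c * B ω) := Real.sqrt_pos.2 (by positivity)
    have hle : Real.sqrt (c * B ω) ≤ Real.sqrt (S ω) := by
      apply Real.sqrt_le_sqrt
      have := hWnn ω; simp only [hSdef]; nlinarith
    have step1 : φ ω * B ω ≤ B ω * (1 / (2 * Real.sqrt (c * B ω))) := by
      simp only [hφdef]
      rw [mul_comm]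
      exact mul_le_mul_of_nonneg_left
        (one_div_le_one_div_of_le (by linarith) (by linarith)) (hBnn ω)
    have step2 : B ω * (1 / (2 * Real.sqrt (c * B ω)))
        = Real.sqrt (B ω) / (2 * Real.sqrt c) := by
      rw [Real.sqrt_mul hc.le, mul_one_div, div_eq_div_iff (by positivity) (by positivity)]
      nlinarith [Real.mul_self_sqrt (hBnn ω)]
    have step3 : Real.sqrt (B ω) ≤ Real.sqrt D₀ + Real.sqrt D₁ * |h ω| := by
      have h2 := sqrt_add_le D₀ (D₁ * (h ω) ^ 2) hD₀.le (by positivity)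
      have h3 : Real.sqrt (D₁ * (h ω) ^ 2) = Real.sqrt D₁ * |h ω| := by
        rw [Real.sqrt_mul hD₁.le, Real.sqrt_sq_eq_abs]
      rw [h3] at h2; exact h2
    calc φ ω * B ω ≤ Real.sqrt (B ω) / (2 * Real.sqrt c) := by rw [← step2]; exact step1
      _ ≤ (Real.sqrt D₀ + Real.sqrt D₁ * |h ω|) / (2 * Real.sqrt c) :=
          (div_le_div_iff_of_pos_right (by positivity)).mpr step3
  have hintφcond : Integrable (fun ω => φ ω * (μ[X|m]) ω) μ :=
    integrable_condExp.bdd_mul (c := 1 / (2 * Real.sqrt (c * D₀))) hφm0 (Filter.Eventually.of_forall fun ω => by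
      rw [Real.norm_eq_abs, abs_of_nonneg (hφnn ω)]; exact hφbdd ω)
  -- conditional expectation argument
  have e1 : ∫ ω, φ ω * X ω ∂μ = ∫ ω, φ ω * (μ[X|m]) ω ∂μ := by
    have hpull : μ[fun ω => φ ω * X ω|m] =ᵐ[μ] fun ω => φ ω * (μ[X|m]) ω :=
      condExp_mul_of_stronglyMeasurable_left hφm hintφX hX
    calc ∫ ω, φ ω * X ω ∂μ = ∫ ω, (μ[fun ω => φ ω * X ω|m]) ω ∂μ :=
          (integral_condExp hm).symm
      _ = ∫ ω, φ ω * (μ[X|m]) ω ∂μ := integral_congr_ae hpull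
  have e2 : ∫ ω, φ ω * (μ[X|m]) ω ∂μ ≤ ∫ ω, φ ω * B ω ∂μ :=
    integral_mono_ae hintφcond hintφB
      (hvar.mono fun ω hω => mul_le_mul_of_nonneg_left hω (hφnn ω))
  have hint3 : Integrable (fun ω => Real.sqrt (W ω + c * D₀)
      + Real.sqrt (c * D₁) * |h ω|) μ := hintWD.add habs'
  have hint4 : Integrable (fun ω => Real.sqrt (W ω + c * D₀)
      + Real.sqrt (c * D₁) * |h ω| + c * (φ ω * X ω)) μ := hint3.add (hintφX.const_mul c)
  -- main chain
  have main : ∫ ω, Real.sqrt (W ω + c * X ω) ∂μ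
      ≤ ∫ ω, (Real.sqrt (W ω + c * D₀) + Real.sqrt (c * D₁) * |h ω|
          + c * (φ ω * X ω) - c * (φ ω * B ω)) ∂μ := by
    refine integral_mono hint1 (hint4.sub (hintφB.const_mul c)) fun ω => ?_
    have := hpt1 ω; have := hpt2 ω
    dsimp only; linarith
  have E3 : ∫ ω, (Real.sqrt (W ω + c * D₀) + Real.sqrt (c * D₁) * |h ω|
        + c * (φ ω * X ω) - c * (φ ω * B ω)) ∂μ
      = ∫ ω, (Real.sqrt (W ω + c * D₀) + Real.sqrt (c * D₁) * |h ω|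
        + c * (φ ω * X ω)) ∂μ - ∫ ω, c * (φ ω * B ω) ∂μ :=
    integral_sub hint4 (hintφB.const_mul c)
  have E4 : ∫ ω, (Real.sqrt (W ω + c * D₀) + Real.sqrt (c * D₁) * |h ω|
        + c * (φ ω * X ω)) ∂μ
      = ∫ ω, (Real.sqrt (W ω + c * D₀) + Real.sqrt (c * D₁) * |h ω|) ∂μ
        + ∫ ω, c * (φ ω * X ω) ∂μ :=
    integral_add hint3 (hintφX.const_mul c)
  have E5 : ∫ ω, (Real.sqrt (W ω + c * D₀) + Real.sqrt (c * D₁) * |h ω|) ∂μ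
      = ∫ ω, Real.sqrt (W ω + c * D₀) ∂μ + ∫ ω, Real.sqrt (c * D₁) * |h ω| ∂μ :=
    integral_add hintWD habs'
  have F1 : ∫ ω, Real.sqrt (c * D₁) * |h ω| ∂μ
      = Real.sqrt (c * D₁) * ∫ ω, |h ω| ∂μ := integral_const_mul _ _
  have F2 : ∫ ω, c * (φ ω * X ω) ∂μ = c * ∫ ω, φ ω * X ω ∂μ := integral_const_mul _ _
  have F3 : ∫ ω, c * (φ ω * B ω) ∂μ = c * ∫ ω, φ ω * B ω ∂μ := integral_const_mul _ _
  have hcle : c * ∫ ω, φ ω * X ω ∂μ ≤ c * ∫ ω, φ ω * B ω ∂μ := by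
    rw [e1]; exact mul_le_mul_of_nonneg_left e2 hc.le
  linarith

/-- Recursive second-moment bound (key step of the Stage II lemma).  Under the affine
noise variance assumption and the recursion `v_{t,i} = β₂·v_{t−1,i} + (1−β₂)·g_{t,i}²`,
for every `t ≥ 1` and every coordinate `i`:
`E[√(β₂·v_{t−1,i})] ≤ √(D₀ + ‖v₀‖) + Σ_{j=1}^{t−1} √(β₂^j·(1−β₂)·D₁)·E[|∂ᵢf(x_{t−j})|]`. -/
theorem recursive_second_moment_bound
    -- dimension and objective
    {d : ℕ} (hd : 1 ≤ d)
    (f : EuclideanSpace ℝ (Fin d) → ℝ) (hf : Differentiable ℝ f)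
    -- probability space and stochastic gradients
    {Ω : Type} [MeasurableSpace Ω] (μ : Measure Ω) [IsProbabilityMeasure μ]
    (g : ℕ → Ω → EuclideanSpace ℝ (Fin d))
    (hgmeas : ∀ t, Measurable (g t))
    (hgL2 : ∀ t, MemLp (g t) 2 μ)
    -- filtration ℱ_t = σ(g₁, …, g_{t−1})
    (ℱ : ℕ → MeasurableSpace Ω)
    (hℱ : ∀ t, ℱ t = ⨆ s ∈ Finset.Ico 1 t, MeasurableSpace.comap (g s) inferInstance)
    -- ℱ_t-measurable random points x_t, with deterministic x₀ = x₁
    (x : ℕ → Ω → EuclideanSpace ℝ (Fin d)) (x₁ : EuclideanSpace ℝ (Fin d))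
    (hxmeas : ∀ t, Measurable[ℱ t] (x t))
    (hx1 : x 1 = fun _ => x₁) (hx0 : x 0 = x 1)
    -- second-moment recursion
    (β₂ : ℝ) (hβ₂ : β₂ ∈ Set.Ioo (0 : ℝ) 1)
    (v : ℕ → Ω → EuclideanSpace ℝ (Fin d)) (v₀ : EuclideanSpace ℝ (Fin d))
    (hv₀ : ∀ i, 0 < v₀ i) (hv0 : v 0 = fun _ => v₀)
    (hvrec : ∀ t, 1 ≤ t → ∀ ω, ∀ i : Fin d,
      v t ω i = β₂ * v (t - 1) ω i + (1 - β₂) * (g t ω i) ^ 2)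
    -- Assumption 2: coordinate-wise affine noise variance
    (D₀ D₁ : ℝ) (hD₀ : 0 < D₀) (hD₁ : 0 < D₁)
    (hmean : ∀ t, 1 ≤ t → ∀ i : Fin d,
      μ[fun ω => g t ω i|ℱ t] =ᵐ[μ] fun ω => gradient f (x t ω) i)
    (hvar : ∀ t, 1 ≤ t → ∀ i : Fin d, ∀ᵐ ω ∂μ,
      (μ[fun ω => (g t ω i) ^ 2|ℱ t]) ω ≤ D₀ + D₁ * (gradient f (x t ω) i) ^ 2)
    (t : ℕ) (ht : 1 ≤ t) (i : Fin d) :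
    ∫ ω, Real.sqrt (β₂ * v (t - 1) ω i) ∂μ
      ≤ Real.sqrt (D₀ + ‖v₀‖)
        + ∑ j ∈ Finset.Icc 1 (t - 1),
            Real.sqrt (β₂ ^ j * (1 - β₂) * D₁)
              * ∫ ω, |gradient f (x (t - j) ω) i| ∂μ := by
  obtain ⟨hβ₂0, hβ₂1⟩ := hβ₂
  have h1β : 0 < 1 - β₂ := by linarith
  -- basic filtration facts
  have hle : ∀ s, ℱ s ≤ (inferInstance : MeasurableSpace Ω) := by
    intro s; rw [hℱ s]
    exact iSup_le fun j => iSup_le fun _ => (hgmeas j).comap_le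
  have hmono : ∀ {s u : ℕ}, s ≤ u → ℱ s ≤ ℱ u := by
    intro s u hsu; rw [hℱ s, hℱ u]
    refine iSup_le fun j => iSup_le fun hj => ?_
    have hj' : j ∈ Finset.Ico 1 u := by
      rw [Finset.mem_Ico] at hj ⊢; omega
    exact le_iSup₂_of_le j hj' le_rfl
  have hgF : ∀ s u : ℕ, s ∈ Finset.Ico 1 u → Measurable[ℱ u] (g s) := by
    intro s u hs; rw [hℱ u]
    exact Measurable.of_comap_le (le_iSup₂_of_le s hs le_rfl)
  -- coordinate projection
  have hproj : ∀ j : Fin d, Measurable fun y : EuclideanSpace ℝ (Fin d) => y j := by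
    intro j
    exact (EuclideanSpace.proj (𝕜 := ℝ) j).continuous.measurable
  -- gradient measurability
  have hgrad : Measurable fun y : EuclideanSpace ℝ (Fin d) => gradient f y := by
    have he : (fun y : EuclideanSpace ℝ (Fin d) => gradient f y)
        = fun y => (InnerProductSpace.toDual ℝ (EuclideanSpace ℝ (Fin d))).symm
            (fderiv ℝ f y) := rfl
    rw [he]
    exact (InnerProductSpace.toDual ℝ
      (EuclideanSpace ℝ (Fin d))).symm.continuous.measurable.comp (measurable_fderiv ℝ f)
  have hgradc : Measurable fun y : EuclideanSpace ℝ (Fin d) => gradient f y i :=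
    (hproj i).comp hgrad
  have hhm : ∀ s : ℕ, StronglyMeasurable[ℱ s] fun ω => gradient f (x s ω) i :=
    fun s => (hgradc.comp (hxmeas s)).stronglyMeasurable
  have hh_int : ∀ s : ℕ, 1 ≤ s → Integrable (fun ω => gradient f (x s ω) i) μ :=
    fun s hs => (integrable_condExp (m := ℱ s)).congr (hmean s hs i)
  -- coordinate bound
  have hcoord : ∀ (y : EuclideanSpace ℝ (Fin d)) (j : Fin d), |y j| ≤ ‖y‖ := by
    intro y j
    rw [EuclideanSpace.norm_eq, ← Real.sqrt_sq_eq_abs]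
    apply Real.sqrt_le_sqrt
    have := Finset.single_le_sum (f := fun k : Fin d => ‖y k‖ ^ 2)
      (fun k _ => sq_nonneg _) (Finset.mem_univ j)
    simpa [Real.norm_eq_abs, sq_abs] using this
  -- coordinates of g
  have hgiL2 : ∀ s, MemLp (fun ω => g s ω i) 2 μ := fun s =>
    MemLp.of_le (hgL2 s) (((hproj i).comp (hgmeas s)).aestronglyMeasurable)
      (Filter.Eventually.of_forall fun ω => by
        rw [Real.norm_eq_abs]; exact hcoord (g s ω) i)
  have hgisq : ∀ s, Integrable (fun ω => (g s ω i) ^ 2) μ := fun s =>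
    (hgiL2 s).integrable_sq
  -- v facts
  have hv_nonneg : ∀ s ω, 0 ≤ v s ω i := by
    intro s
    induction s with
    | zero => intro ω; rw [hv0]; exact (hv₀ i).le
    | succ s ih =>
      intro ω
      rw [hvrec (s+1) (by omega) ω i]
      simp only [Nat.add_sub_cancel]
      have := ih ω
      nlinarith [sq_nonneg (g (s+1) ω i)]
  have hvF : ∀ s, StronglyMeasurable[ℱ (s+1)] fun ω => v s ω i := by
    intro s
    induction s with
    | zero =>
      have he : (fun ω : Ω => v 0 ω i) = fun _ => v₀ i := by rw [hv0]
      rw [he]; exact stronglyMeasurable_const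
    | succ s ih =>
      have he : (fun ω : Ω => v (s+1) ω i)
          = fun ω => β₂ * v s ω i + (1 - β₂) * (g (s+1) ω i) ^ 2 := by
        funext ω
        have := hvrec (s+1) (by omega) ω i
        simpa using this
      rw [he]
      have h1 : Measurable[ℱ (s+2)] fun ω => v s ω i :=
        (ih.mono (hmono (by omega))).measurable
      have h2 : Measurable[ℱ (s+2)] (g (s+1)) :=
        hgF (s+1) (s+2) (by rw [Finset.mem_Ico]; omega)
      have h3 : Measurable[ℱ (s+2)] fun ω => g (s+1) ω i := (hproj i).comp h2
      exact ((h1.const_mul β₂).add ((h3.pow_const 2).const_mul (1 - β₂))).stronglyMeasurable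
  have hv_int : ∀ s, Integrable (fun ω => v s ω i) μ := by
    intro s
    induction s with
    | zero =>
      have he : (fun ω : Ω => v 0 ω i) = fun _ => v₀ i := by rw [hv0]
      rw [he]; exact integrable_const _
    | succ s ih =>
      have he : (fun ω : Ω => v (s+1) ω i)
          = fun ω => β₂ * v s ω i + (1 - β₂) * (g (s+1) ω i) ^ 2 := by
        funext ω
        have := hvrec (s+1) (by omega) ω i
        simpa using this
      rw [he]
      exact (ih.const_mul β₂).add ((hgisq (s+1)).const_mul (1 - β₂))
  -- the key induction
  have key : ∀ s : ℕ, ∀ c a : ℝ, 0 < c → 0 ≤ a →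
      ∫ ω, Real.sqrt (c * β₂ * v s ω i + a) ∂μ
        ≤ Real.sqrt (c * β₂ ^ (s + 1) * v₀ i + a + c * β₂ * D₀)
          + ∑ k ∈ Finset.range s,
              Real.sqrt (c * β₂ ^ (k + 1) * (1 - β₂) * D₁)
                * ∫ ω, |gradient f (x (s - k) ω) i| ∂μ := by
    intro s
    induction s with
    | zero =>
      intro c a hc ha
      have he : (fun ω : Ω => Real.sqrt (c * β₂ * v 0 ω i + a))
          = fun _ => Real.sqrt (c * β₂ * v₀ i + a) := by rw [hv0]
      rw [he, integral_const]
      simp only [measure_univ, probReal_univ, ENNReal.toReal_one, one_smul, Finset.range_zero,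
        Finset.sum_empty, add_zero]
      apply Real.sqrt_le_sqrt
      have hp : β₂ ^ (0 + 1) = β₂ := by norm_num
      rw [hp]
      nlinarith [mul_pos (mul_pos hc hβ₂0) hD₀]
    | succ s ih =>
      intro c a hc ha
      have hc' : 0 < c * β₂ * (1 - β₂) := by positivity
      -- hypotheses for cond_step with m = ℱ (s+1)
      have hWm : StronglyMeasurable[ℱ (s+1)] fun ω => c * β₂ * β₂ * v s ω i + a :=
        ((hvF s).const_mul (c * β₂ * β₂)).add stronglyMeasurable_const
      have hWnn : ∀ ω, 0 ≤ c * β₂ * β₂ * v s ω i + a := fun ω =>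
        add_nonneg (mul_nonneg (by positivity) (hv_nonneg s ω)) ha
      have hWint : Integrable (fun ω => c * β₂ * β₂ * v s ω i + a) μ :=
        ((hv_int s).const_mul _).add (integrable_const _)
      have hstep := cond_step μ (hle (s+1))
        (fun ω => c * β₂ * β₂ * v s ω i + a)
        (fun ω => (g (s+1) ω i) ^ 2)
        (fun ω => gradient f (x (s+1) ω) i)
        (c * β₂ * (1 - β₂)) D₀ D₁ hc' hD₀ hD₁
        hWm hWnn hWint
        (hgisq (s+1)) (fun ω => sq_nonneg _)
        (hhm (s+1)) (hh_int (s+1) (by omega))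
        (hvar (s+1) (by omega) i)
      have ihs := ih (c * β₂) (a + c * β₂ * (1 - β₂) * D₀) (by positivity)
        (by nlinarith)
      -- rewrite LHS
      have eL : ∫ ω, Real.sqrt (c * β₂ * v (s+1) ω i + a) ∂μ
          = ∫ ω, Real.sqrt ((c * β₂ * β₂ * v s ω i + a)
              + c * β₂ * (1 - β₂) * (g (s+1) ω i) ^ 2) ∂μ := by
        congr 1; funext ω; congr 1
        have hr := hvrec (s+1) (by omega) ω i
        simp only [Nat.add_sub_cancel] at hr
        rw [hr]; ring
      have eM : ∫ ω, Real.sqrt ((c * β₂ * β₂ * v s ω i + a)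
            + c * β₂ * (1 - β₂) * D₀) ∂μ
          = ∫ ω, Real.sqrt (c * β₂ * β₂ * v s ω i
              + (a + c * β₂ * (1 - β₂) * D₀)) ∂μ := by
        congr 1; funext ω; congr 1; ring
      have eC : Real.sqrt (c * β₂ * β₂ ^ (s + 1) * v₀ i
            + (a + c * β₂ * (1 - β₂) * D₀) + c * β₂ * β₂ * D₀)
          = Real.sqrt (c * β₂ ^ (s + 1 + 1) * v₀ i + a + c * β₂ * D₀) := by
        congr 1; ring
      have eS : (∑ k ∈ Finset.range s,
            Real.sqrt (c * β₂ * β₂ ^ (k + 1) * (1 - β₂) * D₁)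
              * ∫ ω, |gradient f (x (s - k) ω) i| ∂μ)
          + Real.sqrt (c * β₂ * (1 - β₂) * D₁)
              * ∫ ω, |gradient f (x (s+1) ω) i| ∂μ
          = ∑ k ∈ Finset.range (s + 1),
              Real.sqrt (c * β₂ ^ (k + 1) * (1 - β₂) * D₁)
                * ∫ ω, |gradient f (x (s + 1 - k) ω) i| ∂μ := by
        rw [Finset.sum_range_succ']
        congr 1
        · refine Finset.sum_congr rfl fun k _ => ?_
          have hx' : s + 1 - (k + 1) = s - k := by omega
          rw [hx']
          congr 2
          ring
        · have hx' : s + 1 - 0 = s + 1 := by omega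
          rw [hx']
          congr 2
          ring
      rw [eL]
      refine hstep.trans ?_
      rw [eM]
      have := add_le_add_right ihs
        (Real.sqrt (c * β₂ * (1 - β₂) * D₁) * ∫ ω, |gradient f (x (s+1) ω) i| ∂μ)
      rw [eC] at this
      calc ∫ ω, Real.sqrt (c * β₂ * β₂ * v s ω i
              + (a + c * β₂ * (1 - β₂) * D₀)) ∂μ
            + Real.sqrt (c * β₂ * (1 - β₂) * D₁)
              * ∫ ω, |gradient f (x (s+1) ω) i| ∂μ
          ≤ Real.sqrt (c * β₂ ^ (s + 1 + 1) * v₀ i + a + c * β₂ * D₀)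
            + ((∑ k ∈ Finset.range s,
                Real.sqrt (c * β₂ * β₂ ^ (k + 1) * (1 - β₂) * D₁)
                  * ∫ ω, |gradient f (x (s - k) ω) i| ∂μ)
              + Real.sqrt (c * β₂ * (1 - β₂) * D₁)
                * ∫ ω, |gradient f (x (s+1) ω) i| ∂μ) := by linarith
        _ = _ := by rw [eS]
  -- final assembly
  have hmain := key (t - 1) 1 0 one_pos le_rfl
  simp only [one_mul, add_zero] at hmain
  have habs : |v₀ i| ≤ ‖v₀‖ := hcoord v₀ i
  have h1 : Real.sqrt (β₂ ^ (t - 1 + 1) * v₀ i + β₂ * D₀)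
      ≤ Real.sqrt (D₀ + ‖v₀‖) := by
    apply Real.sqrt_le_sqrt
    have hpow : β₂ ^ (t - 1 + 1) ≤ 1 := pow_le_one₀ hβ₂0.le hβ₂1.le
    have hpow0 : 0 < β₂ ^ (t - 1 + 1) := pow_pos hβ₂0 _
    have hvi := hv₀ i
    have : v₀ i ≤ ‖v₀‖ := le_trans (le_abs_self _) habs
    nlinarith
  have hsum : ∑ j ∈ Finset.Icc 1 (t - 1),
        Real.sqrt (β₂ ^ j * (1 - β₂) * D₁)
          * ∫ ω, |gradient f (x (t - j) ω) i| ∂μ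
      = ∑ k ∈ Finset.range (t - 1),
          Real.sqrt (β₂ ^ (k + 1) * (1 - β₂) * D₁)
            * ∫ ω, |gradient f (x (t - 1 - k) ω) i| ∂μ := by
    refine Finset.sum_bij' (i := fun j _ => j - 1) (j := fun k _ => k + 1)
      ?_ ?_ ?_ ?_ ?_
    · intro j hj; rw [Finset.mem_Icc] at hj; rw [Finset.mem_range]
      show j - 1 < t - 1; omega
    · intro k hk; rw [Finset.mem_range] at hk; rw [Finset.mem_Icc]
      show 1 ≤ k + 1 ∧ k + 1 ≤ t - 1; omega
    · intro j hj; rw [Finset.mem_Icc] at hj; show j - 1 + 1 = j; omega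
    · intro k hk; show k + 1 - 1 = k; omega
    · intro j hj
      rw [Finset.mem_Icc] at hj
      have e1 : j - 1 + 1 = j := by omega
      have e2 : t - 1 - (j - 1) = t - j := by omega
      rw [e1, e2]
  rw [hsum]
  exact hmain.trans (add_le_add h1 le_rfl)
end

section
/- Lemma (ratio bound for momentum over root of second moment). If 0 < β₁² < β₂ < 1 and ζ > 0, then for every t ≥ 1: b_t / √(a_t + ζ) ≤ (1 − β₁) / ( √(1 − β₂) · √(1 − β₁²/β₂) ). -/
/-- Lemma (ratio bound for momentum over root of second moment).
If `0 < β₁² < β₂ < 1` and `ζ > 0`, then for every `t ≥ 1`,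
`b t / √(a t + ζ) ≤ (1 − β₁) / (√(1 − β₂) · √(1 − β₁²/β₂))`. -/
theorem momentum_ratio_bound
    (β₁ β₂ ζ : ℝ) (hβ₁ : 0 < β₁ ^ 2) (hβ₁β₂ : β₁ ^ 2 < β₂) (hβ₂ : β₂ < 1) (hζ : 0 < ζ)
    (a b c : ℕ → ℝ) (hc : ∀ t, 1 ≤ t → 0 ≤ c t) (ha0 : 0 ≤ a 0) (hb0 : b 0 = 0)
    (ha : ∀ t, 1 ≤ t → a t = β₂ * a (t - 1) + (1 - β₂) * (c t) ^ 2)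
    (hb : ∀ t, 1 ≤ t → b t = β₁ * b (t - 1) + (1 - β₁) * c t) :
    ∀ t, 1 ≤ t →
      b t / Real.sqrt (a t + ζ)
        ≤ (1 - β₁) / (Real.sqrt (1 - β₂) * Real.sqrt (1 - β₁ ^ 2 / β₂)) := by
  have hβ₂pos : 0 < β₂ := lt_trans hβ₁ hβ₁β₂
  have h1β₂ : 0 < 1 - β₂ := by linarith
  have h1r : 0 < 1 - β₁ ^ 2 / β₂ := by
    rw [sub_pos, div_lt_one hβ₂pos]; exact hβ₁β₂
  have hβ₁lt : β₁ < 1 := by nlinarith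
  have h1β₁ : 0 < 1 - β₁ := by linarith
  -- the key polynomial invariant
  have key : ∀ t, 0 ≤ a t ∧
      (1 - β₂) * (β₂ - β₁ ^ 2) * (b t) ^ 2 ≤ β₂ * (1 - β₁) ^ 2 * a t := by
    intro t
    induction t with
    | zero =>
      refine ⟨ha0, ?_⟩
      rw [hb0]
      nlinarith [mul_nonneg (mul_nonneg hβ₂pos.le (sq_nonneg (1 - β₁))) ha0]
    | succ n ih =>
      obtain ⟨han, hbn⟩ := ih
      have hc' := hc (n + 1) (by omega)
      have ha' := ha (n + 1) (by omega)
      have hb' := hb (n + 1) (by omega)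
      simp only [Nat.add_sub_cancel] at ha' hb'
      refine ⟨?_, ?_⟩
      · rw [ha']
        nlinarith [sq_nonneg (c (n + 1))]
      · rw [ha', hb']
        nlinarith [sq_nonneg ((β₂ - β₁ ^ 2) * b n - β₁ * (1 - β₁) * c (n + 1)),
          hbn, han, sq_nonneg (c (n + 1))]
  intro t _
  obtain ⟨hat, hbt⟩ := key t
  have hA : 0 < a t + ζ := by linarith
  have hsA : 0 < Real.sqrt (a t + ζ) := Real.sqrt_pos.2 hA
  have hD : 0 < Real.sqrt (1 - β₂) * Real.sqrt (1 - β₁ ^ 2 / β₂) := by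
    exact mul_pos (Real.sqrt_pos.2 h1β₂) (Real.sqrt_pos.2 h1r)
  rw [div_le_div_iff₀ hsA hD]
  rcases le_or_gt (b t) 0 with hbneg | hbpos
  · have : b t * (Real.sqrt (1 - β₂) * Real.sqrt (1 - β₁ ^ 2 / β₂)) ≤ 0 :=
      mul_nonpos_of_nonpos_of_nonneg hbneg (le_of_lt hD)
    have : 0 ≤ (1 - β₁) * Real.sqrt (a t + ζ) := by positivity
    linarith
  · have h2 : (b t * (Real.sqrt (1 - β₂) * Real.sqrt (1 - β₁ ^ 2 / β₂))) ^ 2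
        ≤ ((1 - β₁) * Real.sqrt (a t + ζ)) ^ 2 := by
      have e1 : (Real.sqrt (1 - β₂)) ^ 2 = 1 - β₂ := Real.sq_sqrt h1β₂.le
      have e2 : (Real.sqrt (1 - β₁ ^ 2 / β₂)) ^ 2 = 1 - β₁ ^ 2 / β₂ := Real.sq_sqrt h1r.le
      have e3 : (Real.sqrt (a t + ζ)) ^ 2 = a t + ζ := Real.sq_sqrt hA.le
      have e4 : β₂ * (β₁ ^ 2 / β₂) = β₁ ^ 2 := by field_simp
      have expand : (b t * (Real.sqrt (1 - β₂) * Real.sqrt (1 - β₁ ^ 2 / β₂))) ^ 2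
          = (b t) ^ 2 * ((1 - β₂) * (1 - β₁ ^ 2 / β₂)) := by
        rw [mul_pow, mul_pow, e1, e2]
      have expand2 : ((1 - β₁) * Real.sqrt (a t + ζ)) ^ 2
          = (1 - β₁) ^ 2 * (a t + ζ) := by
        rw [mul_pow, e3]
      rw [expand, expand2, ← mul_le_mul_iff_of_pos_right hβ₂pos]
      have e5 : b t ^ 2 * ((1 - β₂) * (1 - β₁ ^ 2 / β₂)) * β₂
          = (1 - β₂) * (β₂ - β₁ ^ 2) * b t ^ 2 := by
        field_simp
      rw [e5]
      nlinarith [hbt, mul_nonneg (mul_nonneg (sq_nonneg (1 - β₁)) hζ.le) hβ₂pos.le]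
    calc b t * (Real.sqrt (1 - β₂) * Real.sqrt (1 - β₁ ^ 2 / β₂))
        = Real.sqrt ((b t * (Real.sqrt (1 - β₂) * Real.sqrt (1 - β₁ ^ 2 / β₂))) ^ 2) := by
          rw [Real.sqrt_sq (by positivity)]
      _ ≤ Real.sqrt (((1 - β₁) * Real.sqrt (a t + ζ)) ^ 2) := Real.sqrt_le_sqrt h2
      _ = (1 - β₁) * Real.sqrt (a t + ζ) := Real.sqrt_sq (by positivity)
end

section
/- Geometric-weight Cauchy–Schwarz step. If 0 < β₁ < √β₂, 0 < β₂ < 1, and a₀ > 0, then for every t ≥ 1: b_t²/a_t ≤ ( (1−β₁)² / (1 − β₁/√β₂) ) · Σ_{i=1}^t (β₁/√β₂)^{t−i} · c_i²/a_i. -/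
/-- Geometric-weight Cauchy–Schwarz step. If `0 < β₁ < √β₂`, `0 < β₂ < 1`, and `a₀ > 0`,
then for every `t ≥ 1`,
`b_t²/a_t ≤ ((1−β₁)²/(1 − β₁/√β₂)) · Σ_{i=1}^t (β₁/√β₂)^{t−i} · c_i²/a_i`. -/
theorem geometric_weight_cauchy_schwarz_step
    (β₁ β₂ : ℝ) (hβ₁0 : 0 < β₁) (hβ₁β₂ : β₁ < Real.sqrt β₂)
    (hβ₂0 : 0 < β₂) (hβ₂1 : β₂ < 1)
    (a b c : ℕ → ℝ) (hc : ∀ t, 1 ≤ t → 0 ≤ c t) (ha0 : 0 < a 0) (hb0 : b 0 = 0)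
    (ha : ∀ t, 1 ≤ t → a t = β₂ * a (t - 1) + (1 - β₂) * (c t) ^ 2)
    (hb : ∀ t, 1 ≤ t → b t = β₁ * b (t - 1) + (1 - β₁) * c t) :
    ∀ t : ℕ, 1 ≤ t →
      (b t) ^ 2 / a t
        ≤ ((1 - β₁) ^ 2 / (1 - β₁ / Real.sqrt β₂))
            * ∑ i ∈ Finset.Icc 1 t, (β₁ / Real.sqrt β₂) ^ (t - i) * ((c i) ^ 2 / a i) := by
  intro t ht
  set s := Real.sqrt β₂ with hsdef
  have hs0 : 0 < s := Real.sqrt_pos.mpr hβ₂0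
  have hss : s * s = β₂ := Real.mul_self_sqrt hβ₂0.le
  have hs1 : s < 1 := by nlinarith
  have hβ₁1 : β₁ < 1 := hβ₁β₂.trans hs1
  set r := β₁ / s with hrdef
  have hr0 : 0 < r := div_pos hβ₁0 hs0
  have hr1 : r < 1 := (div_lt_one hs0).mpr hβ₁β₂
  -- positivity of a
  have hapos : ∀ n, 0 < a n := by
    intro n
    induction n with
    | zero => exact ha0
    | succ k ih =>
      rw [ha (k + 1) (by omega)]
      simp only [Nat.add_sub_cancel]
      nlinarith [sq_nonneg (c (k + 1))]
  -- geometric lower bound on a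
  have hageom : ∀ i t', i ≤ t' → β₂ ^ (t' - i) * a i ≤ a t' := by
    intro i t'
    induction t' with
    | zero => intro h; interval_cases i; simp
    | succ k ih =>
      intro h
      rcases Nat.lt_or_ge i (k + 1) with h' | h'
      · have hik : i ≤ k := Nat.lt_succ_iff.mp h'
        have h2 := ih hik
        rw [ha (k + 1) (by omega)]
        simp only [Nat.add_sub_cancel]
        have h3 : k + 1 - i = (k - i) + 1 := by omega
        rw [h3, pow_succ]
        nlinarith [sq_nonneg (c (k + 1)), pow_nonneg hβ₂0.le (k - i), (hapos i).le]
      · have : i = k + 1 := le_antisymm h h'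
        subst this; simp
  -- closed form for b
  have hbform : ∀ n, b n = (1 - β₁) * ∑ i ∈ Finset.Icc 1 n, β₁ ^ (n - i) * c i := by
    intro n
    induction n with
    | zero => simp [hb0]
    | succ k ih =>
      rw [hb (k + 1) (by omega)]
      simp only [Nat.add_sub_cancel]
      rw [ih, Finset.sum_Icc_succ_top (by omega : 1 ≤ k + 1)]
      have hstep : ∑ i ∈ Finset.Icc 1 k, β₁ ^ (k + 1 - i) * c i
          = β₁ * ∑ i ∈ Finset.Icc 1 k, β₁ ^ (k - i) * c i := by
        rw [Finset.mul_sum]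
        apply Finset.sum_congr rfl
        intro i hi
        simp only [Finset.mem_Icc] at hi
        have : k + 1 - i = (k - i) + 1 := by omega
        rw [this, pow_succ]; ring
      rw [hstep]; simp; ring
  -- geometric sum identity
  have hgeoeq : ∀ n : ℕ, ∑ i ∈ Finset.Icc 1 n, r ^ (n - i) = ∑ j ∈ Finset.range n, r ^ j := by
    intro n
    induction n with
    | zero => simp
    | succ k ih =>
      rw [Finset.sum_Icc_succ_top (by omega : 1 ≤ k + 1), geom_sum_succ]
      have hstep : ∑ i ∈ Finset.Icc 1 k, r ^ (k + 1 - i)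
          = r * ∑ i ∈ Finset.Icc 1 k, r ^ (k - i) := by
        rw [Finset.mul_sum]
        apply Finset.sum_congr rfl
        intro i hi
        simp only [Finset.mem_Icc] at hi
        have : k + 1 - i = (k - i) + 1 := by omega
        rw [this, pow_succ]; ring
      rw [hstep, ih]; simp
  have hgeo : ∑ i ∈ Finset.Icc 1 t, r ^ (t - i) ≤ 1 / (1 - r) := by
    rw [hgeoeq t, geom_sum_eq hr1.ne]
    have h1r : 0 < 1 - r := by linarith
    have : (r ^ t - 1) / (r - 1) = (1 - r ^ t) / (1 - r) := by
      rw [div_eq_div_iff (by linarith) (by linarith)]; ring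
    rw [this]
    have : r ^ t ≥ 0 := pow_nonneg hr0.le t
    gcongr
    linarith
  -- Cauchy–Schwarz
  set S := ∑ i ∈ Finset.Icc 1 t, β₁ ^ (t - i) * c i with hSdef
  set T := ∑ i ∈ Finset.Icc 1 t, (β₁ * s) ^ (t - i) * (c i) ^ 2 with hTdef
  have hCS : S ^ 2 ≤ (∑ i ∈ Finset.Icc 1 t, r ^ (t - i)) * T := by
    have := Finset.sum_mul_sq_le_sq_mul_sq (Finset.Icc 1 t)
      (fun i => Real.sqrt (r ^ (t - i)))
      (fun i => Real.sqrt ((β₁ * s) ^ (t - i)) * c i)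
    have heq1 : ∀ i ∈ Finset.Icc 1 t,
        Real.sqrt (r ^ (t - i)) * (Real.sqrt ((β₁ * s) ^ (t - i)) * c i)
          = β₁ ^ (t - i) * c i := by
      intro i hi
      rw [← mul_assoc, ← Real.sqrt_mul (pow_nonneg hr0.le _), ← mul_pow]
      have : r * (β₁ * s) = β₁ ^ 2 := by
        field_simp [hrdef]; rw [hrdef]; field_simp
      rw [this, ← pow_mul, mul_comm 2 (t - i), pow_mul, Real.sqrt_sq (pow_nonneg hβ₁0.le _)]
    have heq2 : ∀ i ∈ Finset.Icc 1 t,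
        (Real.sqrt (r ^ (t - i))) ^ 2 = r ^ (t - i) := by
      intro i _; exact Real.sq_sqrt (pow_nonneg hr0.le _)
    have heq3 : ∀ i ∈ Finset.Icc 1 t,
        (Real.sqrt ((β₁ * s) ^ (t - i)) * c i) ^ 2 = (β₁ * s) ^ (t - i) * (c i) ^ 2 := by
      intro i _
      rw [mul_pow, Real.sq_sqrt (pow_nonneg (by positivity) _)]
    rw [Finset.sum_congr rfl heq1, Finset.sum_congr rfl heq2, Finset.sum_congr rfl heq3] at this
    exact this
  have hTnn : 0 ≤ T := by
    apply Finset.sum_nonneg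
    intro i _
    positivity
  have hCS' : S ^ 2 ≤ (1 / (1 - r)) * T := by
    calc S ^ 2 ≤ (∑ i ∈ Finset.Icc 1 t, r ^ (t - i)) * T := hCS
      _ ≤ (1 / (1 - r)) * T := by
          apply mul_le_mul_of_nonneg_right hgeo hTnn
  -- term-wise bound for T / a t
  have hTdiv : T / a t ≤ ∑ i ∈ Finset.Icc 1 t, r ^ (t - i) * ((c i) ^ 2 / a i) := by
    rw [hTdef, Finset.sum_div]
    apply Finset.sum_le_sum
    intro i hi
    simp only [Finset.mem_Icc] at hi
    have hit : i ≤ t := hi.2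
    have hai : 0 < a i := hapos i
    have hat : 0 < a t := hapos t
    have hlow : 0 < β₂ ^ (t - i) * a i := by positivity
    have h1 : (β₁ * s) ^ (t - i) * (c i) ^ 2 / a t
        ≤ (β₁ * s) ^ (t - i) * (c i) ^ 2 / (β₂ ^ (t - i) * a i) := by
      apply div_le_div_of_nonneg_left (by positivity) hlow (hageom i t hit)
    refine h1.trans (le_of_eq ?_)
    rw [← hss]
    have hkey : (β₁ * s) ^ (t - i) / ((s * s) ^ (t - i)) = r ^ (t - i) := by
      rw [← div_pow]
      congr 1
      field_simp [hrdef]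
      rw [hrdef]; field_simp
    have hexp : (β₁ * s) ^ (t - i) = r ^ (t - i) * (s * s) ^ (t - i) := by
      rw [← hkey]
      field_simp
    field_simp
    rw [hexp]; ring
  -- assemble
  have hat : 0 < a t := hapos t
  have h1r : 0 < 1 - r := by linarith
  have hcoef : 0 ≤ (1 - β₁) ^ 2 / (1 - r) := by positivity
  calc (b t) ^ 2 / a t = (1 - β₁) ^ 2 * S ^ 2 / a t := by rw [hbform t, mul_pow]
    _ ≤ (1 - β₁) ^ 2 * ((1 / (1 - r)) * T) / a t := by
        gcongr
    _ = ((1 - β₁) ^ 2 / (1 - r)) * (T / a t) := by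
        field_simp
    _ ≤ ((1 - β₁) ^ 2 / (1 - r)) * ∑ i ∈ Finset.Icc 1 t, r ^ (t - i) * ((c i) ^ 2 / a i) := by
        exact mul_le_mul_of_nonneg_left hTdiv hcoef
end
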